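/- arXiv:1601.07123 — 6 statements merged into one kernel-verified Lean document; each statement's English description precedes it below -/
import Mathlib

section
/- Let ε > 0 and let g ∈ C_c^∞(ℝ) with supp g ⊆ {x ∈ ℝ : |b(x)| ≥ ε}. Then for every y ∈ ℝ, with the convention z/0 := 0, both integrals below are absolutely convergent and, via integration by parts in t, ∫_0^∞ e(y,t) g'(γ_t(y)) dt = −g(y)/b(y) + ∫_0^∞ e(y,t) · ((f(γ_t(y)) + b'(γ_t(y)))/b(γ_t(y))) · g(γ_t(y)) dt. -/
open MeasureTheory Set Filter

/-- Integration by parts in the jump time. For `g` smooth with compact support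
contained in `{|b| ≥ ε}`, and `e (y,t) = exp (-∫_0^t f (γ s y) ds)`, both integrals below
converge absolutely and
`∫_0^∞ e(y,t) g'(γ_t(y)) dt
  = -g(y)/b(y) + ∫_0^∞ e(y,t) ((f(γ_t(y)) + b'(γ_t(y)))/b(γ_t(y))) g(γ_t(y)) dt`
(with the convention `z/0 = 0`, which is Lean's default). -/
theorem jump_time_integration_by_parts
    (B : ℝ) (hB : 0 < B) (b : ℝ → ℝ)
    (hb : ContDiff ℝ 1 b) (hb' : ∀ v : ℝ, |deriv b v| ≤ B)
    (γ : ℝ → ℝ → ℝ)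
    (hγ0 : ∀ x : ℝ, γ 0 x = x)
    (hγ : ∀ (x t : ℝ), 0 ≤ t → HasDerivAt (fun s => γ s x) (b (γ t x)) t)
    (f : ℝ → ℝ) (hfpos : ∀ x, 0 < f x) (hfLip : ∃ L : NNReal, LipschitzWith L f)
    (hfdiv : ∀ x : ℝ, (∫⁻ s in Ioi (0:ℝ), ENNReal.ofReal (f (γ s x))) = ⊤)
    (ε : ℝ) (hε : 0 < ε)
    (g : ℝ → ℝ) (hg : ContDiff ℝ (⊤ : ℕ∞) g) (hgc : HasCompactSupport g)
    (hsupp : tsupport g ⊆ {x : ℝ | ε ≤ |b x|}) :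
    ∀ y : ℝ,
      IntegrableOn
        (fun t => Real.exp (-∫ s in (0:ℝ)..t, f (γ s y)) * deriv g (γ t y))
        (Ioi 0) ∧
      IntegrableOn
        (fun t => Real.exp (-∫ s in (0:ℝ)..t, f (γ s y)) *
          ((f (γ t y) + deriv b (γ t y)) / b (γ t y)) * g (γ t y))
        (Ioi 0) ∧
      (∫ t in Ioi (0:ℝ),
          Real.exp (-∫ s in (0:ℝ)..t, f (γ s y)) * deriv g (γ t y))
        = -(g y / b y) +
          ∫ t in Ioi (0:ℝ),
            Real.exp (-∫ s in (0:ℝ)..t, f (γ s y)) *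
              ((f (γ t y) + deriv b (γ t y)) / b (γ t y)) * g (γ t y) := by
  intro y
  -- preliminaries
  have hbdiff : Differentiable ℝ b := hb.differentiable one_ne_zero
  have hbcont : Continuous b := hbdiff.continuous
  have hb'cont : Continuous (deriv b) := hb.continuous_deriv le_rfl
  obtain ⟨L, hfL⟩ := hfLip
  have hfcont : Continuous f := hfL.continuous
  have hgcont : Continuous g := hg.continuous
  have hgdiff : Differentiable ℝ g := hg.differentiable (by simp)
  have hg'cont : Continuous (deriv g) := hg.continuous_deriv (by exact_mod_cast le_top)
  set K : Set ℝ := tsupport g with hKdef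
  have hKc : IsCompact K := hgc
  -- the truncated flow
  set c : ℝ → ℝ := fun t => γ (max t 0) y with hcdef
  have hc0 : c 0 = y := by simp [hcdef, hγ0]
  have hceq : ∀ t : ℝ, 0 ≤ t → c t = γ t y := by
    intro t ht; simp [hcdef, max_eq_left ht]
  have hcneg : ∀ t : ℝ, t ≤ 0 → c t = y := by
    intro t ht; simp [hcdef, max_eq_right ht, hγ0]
  have hccont : Continuous c := by
    rw [continuous_iff_continuousAt]
    intro t
    have h1 : ContinuousAt (fun s => γ s y) (max t 0) :=
      (hγ y (max t 0) (le_max_right t 0)).continuousAt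
    have h2 : ContinuousAt (fun t : ℝ => max t 0) t :=
      (continuous_id.max continuous_const).continuousAt
    exact ContinuousAt.comp (g := fun s => γ s y) h1 h2
  have hcderivW : ∀ t : ℝ, 0 ≤ t → HasDerivWithinAt c (b (c t)) (Ici t) t := by
    intro t ht
    have h1 : HasDerivWithinAt (fun s => γ s y) (b (γ t y)) (Ici t) t :=
      (hγ y t ht).hasDerivWithinAt
    have h2 : HasDerivWithinAt c (b (γ t y)) (Ici t) t :=
      h1.congr (fun s hs => hceq s (le_trans ht hs)) (hceq t ht)
    rwa [← hceq t ht] at h2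
  have hcderiv : ∀ t : ℝ, 0 < t → HasDerivAt c (b (c t)) t := by
    intro t ht
    have h1 : HasDerivAt (fun s => γ s y) (b (γ t y)) t := hγ y t ht.le
    have heq : c =ᶠ[nhds t] fun s => γ s y := by
      filter_upwards [Ioi_mem_nhds ht] with s hs
      exact hceq s (le_of_lt hs)
    have h2 : HasDerivAt c (b (γ t y)) t := h1.congr_of_eventuallyEq heq
    rwa [← hceq t ht.le] at h2
  -- primitives
  set A : ℝ → ℝ := fun t => ∫ s in (0:ℝ)..t, f (c s) with hAdef
  have hfc : Continuous fun s => f (c s) := hfcont.comp hccont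
  have hA : ∀ t : ℝ, HasDerivAt A (f (c t)) t := fun t =>
    (hfc.integral_hasStrictDerivAt 0 t).hasDerivAt
  have hAdiff : Differentiable ℝ A := fun t => (hA t).differentiableAt
  have hAcont : Continuous A := hAdiff.continuous
  set P : ℝ → ℝ := fun t => ∫ s in (0:ℝ)..t, deriv b (c s) with hPdef
  have hb'c : Continuous fun s => deriv b (c s) := hb'cont.comp hccont
  have hP : ∀ t : ℝ, HasDerivAt P (deriv b (c t)) t := fun t =>
    (hb'c.integral_hasStrictDerivAt 0 t).hasDerivAt
  -- the key linear-ODE identity for b along the flow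
  have hbc : ∀ t : ℝ, 0 ≤ t → b (c t) = b y * Real.exp (P t) := by
    intro t ht
    set u : ℝ → ℝ := fun s => b (c s) * Real.exp (-P s) with hudef
    have hP0 : P 0 = 0 := by simp [hPdef]
    have hu0 : u 0 = b y := by simp [hudef, hP0, hc0]
    have hPdiff : Differentiable ℝ P := fun s => (hP s).differentiableAt
    have hucont : ContinuousOn u (Icc 0 t) :=
      ((hbcont.comp hccont).mul ((hPdiff.continuous.neg).rexp)).continuousOn
    have huderiv : ∀ x ∈ Ico (0:ℝ) t, HasDerivWithinAt u 0 (Ici x) x := by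
      intro x hx
      have h1 : HasDerivWithinAt (fun s => b (c s)) (deriv b (c x) * b (c x)) (Ici x) x :=
        (hbdiff (c x)).hasDerivAt.comp_hasDerivWithinAt x (hcderivW x hx.1)
      have h2 : HasDerivAt (fun s => Real.exp (-P s))
          (Real.exp (-P x) * -(deriv b (c x))) x :=
        ((hP x).fun_neg).exp
      have h3 := h1.fun_mul h2.hasDerivWithinAt
      refine h3.congr_deriv ?_
      ring
    have hut := constant_of_has_deriv_right_zero hucont huderiv t ⟨ht, le_rfl⟩
    rw [hu0] at hut
    have : b (c t) * Real.exp (-P t) = b y := hut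
    have hexp : Real.exp (-P t) * Real.exp (P t) = 1 := by
      rw [← Real.exp_add]; simp
    calc b (c t) = b (c t) * (Real.exp (-P t) * Real.exp (P t)) := by rw [hexp, mul_one]
      _ = (b (c t) * Real.exp (-P t)) * Real.exp (P t) := by ring
      _ = b y * Real.exp (P t) := by rw [this]
  by_cases hby : b y = 0
  · -- degenerate case: `y` is an equilibrium, everything vanishes
    have hbc0 : ∀ t : ℝ, 0 ≤ t → b (c t) = 0 := fun t ht => by
      rw [hbc t ht, hby, zero_mul]
    have hcconst : ∀ t : ℝ, 0 ≤ t → c t = y := by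
      intro t ht
      have hderiv : ∀ x ∈ Ico (0:ℝ) t, HasDerivWithinAt c 0 (Ici x) x := by
        intro x hx
        have := hcderivW x hx.1
        rwa [hbc0 x hx.1] at this
      have := constant_of_has_deriv_right_zero hccont.continuousOn hderiv t ⟨ht, le_rfl⟩
      rw [this, hc0]
    have hynot : y ∉ K := by
      intro hy
      have := hsupp hy
      simp only [mem_setOf_eq, hby, abs_zero] at this
      linarith
    have hgy : g y = 0 := image_eq_zero_of_notMem_tsupport hynot
    have hg'y : deriv g y = 0 := by
      by_contra h
      exact hynot (support_deriv_subset (by simpa [Function.mem_support] using h))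
    have hγy : ∀ t : ℝ, 0 < t → γ t y = y := by
      intro t ht
      rw [← hceq t ht.le, hcconst t ht.le]
    have heq1 : EqOn (fun t => Real.exp (-∫ s in (0:ℝ)..t, f (γ s y)) * deriv g (γ t y))
        (fun _ => (0:ℝ)) (Ioi 0) := by
      intro t ht
      simp only [hγy t ht, hg'y, mul_zero]
    have heq2 : EqOn (fun t => Real.exp (-∫ s in (0:ℝ)..t, f (γ s y)) *
        ((f (γ t y) + deriv b (γ t y)) / b (γ t y)) * g (γ t y))
        (fun _ => (0:ℝ)) (Ioi 0) := by
      intro t ht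
      simp only [hγy t ht, hgy, mul_zero]
    refine ⟨(integrableOn_congr_fun heq1 measurableSet_Ioi).2 (integrableOn_zero),
      (integrableOn_congr_fun heq2 measurableSet_Ioi).2 (integrableOn_zero), ?_⟩
    rw [setIntegral_congr_fun measurableSet_Ioi heq1,
      setIntegral_congr_fun measurableSet_Ioi heq2, hgy]
    simp
  · -- main case : `b` never vanishes along the flow
    have hbcne : ∀ t : ℝ, b (c t) ≠ 0 := by
      intro t
      rcases le_or_gt 0 t with ht | ht
      · rw [hbc t ht]; exact mul_ne_zero hby (Real.exp_ne_zero _)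
      · rw [hcneg t ht.le]; exact hby
    set E : ℝ → ℝ := fun t => Real.exp (-A t) with hEdef
    have hEcont : Continuous E := (hAcont.neg).rexp
    have hE : ∀ t, HasDerivAt E (Real.exp (-A t) * -(f (c t))) t := fun t =>
      ((hA t).fun_neg).exp
    have hEpos : ∀ t, 0 < E t := fun t => Real.exp_pos _
    set I1 : ℝ → ℝ := fun t => E t * deriv g (c t) with hI1def
    set I2 : ℝ → ℝ := fun t => E t * ((f (c t) + deriv b (c t)) / b (c t)) * g (c t)
      with hI2def
    have hI1cont : Continuous I1 := hEcont.mul (hg'cont.comp hccont)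
    have hI2cont : Continuous I2 :=
      (hEcont.mul (((hfcont.comp hccont).add (hb'cont.comp hccont)).div
        (hbcont.comp hccont) hbcne)).mul (hgcont.comp hccont)
    set F : ℝ → ℝ := fun t => E t * (g (c t) / b (c t)) with hFdef
    have hFcont : Continuous F :=
      hEcont.mul ((hgcont.comp hccont).div (hbcont.comp hccont) hbcne)
    have hA0 : A 0 = 0 := by simp [hAdef]
    have hF0 : F 0 = g y / b y := by
      simp [hFdef, hEdef, hA0, hc0]
    have hFderiv : ∀ t ∈ Ioi (0:ℝ), HasDerivAt F (I1 t - I2 t) t := by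
      intro t ht
      have hgc' : HasDerivAt (fun s => g (c s)) (deriv g (c t) * b (c t)) t :=
        (hgdiff (c t)).hasDerivAt.comp t (hcderiv t ht)
      have hbc' : HasDerivAt (fun s => b (c s)) (deriv b (c t) * b (c t)) t :=
        (hbdiff (c t)).hasDerivAt.comp t (hcderiv t ht)
      have hdiv := hgc'.fun_div hbc' (hbcne t)
      have hmul := (hE t).fun_mul hdiv
      refine hmul.congr_deriv ?_
      simp only [hI1def, hI2def, hEdef]
      field_simp [hbcne t]
      ring
    -- bounds
    obtain ⟨Cg0, hCg0⟩ := hKc.exists_bound_of_continuousOn hgcont.continuousOn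
    set Cg : ℝ := max Cg0 0 with hCgdef
    have hCgnn : 0 ≤ Cg := le_max_right _ _
    have hCg : ∀ x, |g x| ≤ Cg := by
      intro x
      by_cases hx : x ∈ K
      · exact le_max_of_le_left (by simpa [Real.norm_eq_abs] using hCg0 x hx)
      · simp [image_eq_zero_of_notMem_tsupport hx, hCgnn]
    obtain ⟨C10, hC10⟩ := hKc.exists_bound_of_continuousOn hg'cont.continuousOn
    set C1 : ℝ := max C10 0 with hC1def
    have hC1nn : 0 ≤ C1 := le_max_right _ _
    have hC1 : ∀ x, |deriv g x| ≤ C1 := by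
      intro x
      by_cases hx : x ∈ K
      · exact le_max_of_le_left (by simpa [Real.norm_eq_abs] using hC10 x hx)
      · have : deriv g x = 0 := by
          by_contra h
          exact hx (support_deriv_subset (by simpa [Function.mem_support] using h))
        simp [this, hC1nn]
    obtain ⟨Cf0, hCf0⟩ := hKc.exists_bound_of_continuousOn hfcont.continuousOn
    set Cf : ℝ := max Cf0 0 with hCfdef
    have hCfnn : 0 ≤ Cf := le_max_right _ _
    set C2 : ℝ := (Cf + B) / ε * Cg with hC2def
    have hC2nn : 0 ≤ C2 :=
      mul_nonneg (div_nonneg (add_nonneg hCfnn hB.le) hε.le) hCgnn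
    have hC2 : ∀ x, |(f x + deriv b x) / b x * g x| ≤ C2 := by
      intro x
      by_cases hx : x ∈ K
      · have hbx : ε ≤ |b x| := hsupp hx
        have h1 : |f x + deriv b x| ≤ Cf + B :=
          (abs_add_le _ _).trans (add_le_add
            (le_max_of_le_left (by simpa [Real.norm_eq_abs] using hCf0 x hx)) (hb' x))
        have h2 : |f x + deriv b x| / |b x| ≤ (Cf + B) / ε :=
          div_le_div₀ (add_nonneg hCfnn hB.le) h1 hε hbx
        rw [abs_mul, abs_div]
        exact mul_le_mul h2 (hCg x) (abs_nonneg _)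
          (div_nonneg (add_nonneg hCfnn hB.le) hε.le)
      · simp [image_eq_zero_of_notMem_tsupport hx, hC2nn]
    have hE1 : ∀ t : ℝ, 0 ≤ t → E t ≤ 1 := by
      intro t ht
      have h0 : 0 ≤ A t := intervalIntegral.integral_nonneg ht fun s _ => (hfpos (c s)).le
      calc E t = Real.exp (-A t) := rfl
        _ ≤ Real.exp 0 := Real.exp_le_exp.2 (by linarith)
        _ = 1 := Real.exp_zero
    -- the key integrability / decay facts
    have key : IntegrableOn I1 (Ioi 0) ∧ IntegrableOn I2 (Ioi 0) ∧
        Tendsto F atTop (nhds 0) := by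
      by_cases hesc : ∃ T : ℝ, 0 ≤ T ∧ ∀ t, T ≤ t → c t ∉ K
      · -- the flow eventually escapes the support of g
        obtain ⟨T, hT0, hT⟩ := hesc
        have hg0 : ∀ t, T ≤ t → g (c t) = 0 := fun t ht =>
          image_eq_zero_of_notMem_tsupport (hT t ht)
        have hg'0 : ∀ t, T ≤ t → deriv g (c t) = 0 := by
          intro t ht
          by_contra h
          exact hT t ht (support_deriv_subset (by simpa [Function.mem_support] using h))
        have hsplit : Ioc (0:ℝ) T ∪ Ioi T = Ioi 0 := Ioc_union_Ioi_eq_Ioi hT0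
        have hint : ∀ (I : ℝ → ℝ), Continuous I → (∀ t, T ≤ t → I t = 0) →
            IntegrableOn I (Ioi 0) := by
          intro I hIc hI0
          rw [← hsplit]
          refine (hIc.integrableOn_Ioc).union ?_
          exact (integrableOn_zero).congr_fun
            (fun t ht => (hI0 t (le_of_lt ht)).symm) measurableSet_Ioi
        refine ⟨hint I1 hI1cont (fun t ht => by simp [hI1def, hg'0 t ht]),
          hint I2 hI2cont (fun t ht => by simp [hI2def, hg0 t ht]), ?_⟩
        have hev : F =ᶠ[atTop] fun _ => (0:ℝ) := by
          filter_upwards [eventually_ge_atTop T] with t ht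
          simp [hFdef, hg0 t ht]
        exact Tendsto.congr' hev.symm tendsto_const_nhds
      · -- the flow stays in a compact set, so `E` decays exponentially
        push_neg at hesc
        have htrap : ∀ T : ℝ, 0 ≤ T → ∃ t, T ≤ t ∧ c t ∈ K := by
          intro T hT
          obtain ⟨t, ht1, ht2⟩ := hesc T hT
          exact ⟨t, ht1, ht2⟩
        -- the trajectory is monotone and trapped, hence bounded
        have hmono : MonotoneOn c (Ici (0:ℝ)) ∨ AntitoneOn c (Ici (0:ℝ)) := by
          rcases Ne.lt_or_gt hby with hneg | hpos
          · right
            have hdiff : DifferentiableOn ℝ c (interior (Ici (0:ℝ))) := by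
              rw [interior_Ici]
              exact fun x hx => (hcderiv x hx).differentiableAt.differentiableWithinAt
            refine antitoneOn_of_deriv_nonpos (convex_Ici 0) hccont.continuousOn hdiff ?_
            intro x hx
            rw [interior_Ici] at hx
            rw [(hcderiv x hx).deriv, hbc x hx.le]
            exact mul_nonpos_of_nonpos_of_nonneg hneg.le (Real.exp_pos _).le
          · left
            have hdiff : DifferentiableOn ℝ c (interior (Ici (0:ℝ))) := by
              rw [interior_Ici]
              exact fun x hx => (hcderiv x hx).differentiableAt.differentiableWithinAt
            refine monotoneOn_of_deriv_nonneg (convex_Ici 0) hccont.continuousOn hdiff ?_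
            intro x hx
            rw [interior_Ici] at hx
            rw [(hcderiv x hx).deriv, hbc x hx.le]
            exact mul_nonneg hpos.le (Real.exp_pos _).le
        obtain ⟨t0, ht0T, ht0K⟩ := htrap 0 le_rfl
        have hKne : K.Nonempty := ⟨c t0, ht0K⟩
        obtain ⟨R, hRK, hRub⟩ := hKc.exists_isGreatest hKne
        obtain ⟨r, hrK, hrlb⟩ := hKc.exists_isLeast hKne
        set J : Set ℝ := Icc (min y r) (max y R) with hJdef
        have hJc : IsCompact J := isCompact_Icc
        have hJne : J.Nonempty := ⟨y, min_le_left _ _, le_max_left _ _⟩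
        have hcJ : ∀ t : ℝ, 0 ≤ t → c t ∈ J := by
          intro t ht
          obtain ⟨t', htt', ht'K⟩ := htrap t ht
          have ht'0 : (0:ℝ) ≤ t' := le_trans ht htt'
          rcases hmono with hm | hm
          · constructor
            · exact le_trans (min_le_left _ _) (by rw [← hc0]; exact hm self_mem_Ici ht ht)
            · exact le_trans (le_trans (hm ht ht'0 htt') (hRub ht'K)) (le_max_right _ _)
          · constructor
            · exact le_trans (min_le_right _ _) (le_trans (hrlb ht'K) (hm ht ht'0 htt'))
            · exact le_trans (by rw [← hc0]; exact hm self_mem_Ici ht ht) (le_max_left _ _)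
        obtain ⟨x0, hx0J, hx0min⟩ := hJc.exists_isMinOn hJne hfcont.continuousOn
        set m : ℝ := f x0 with hmdef
        have hm : 0 < m := hfpos x0
        have hmle : ∀ x ∈ J, m ≤ f x := fun x hx => hx0min hx
        have hEexp : ∀ t : ℝ, 0 ≤ t → E t ≤ Real.exp (-(m * t)) := by
          intro t ht
          have hint1 : IntervalIntegrable (fun _ => m) volume 0 t :=
            intervalIntegrable_const
          have hint2 : IntervalIntegrable (fun s => f (c s)) volume 0 t :=
            hfc.intervalIntegrable 0 t
          have hcmp : (∫ s in (0:ℝ)..t, m) ≤ ∫ s in (0:ℝ)..t, f (c s) :=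
            intervalIntegral.integral_mono_on ht hint1 hint2
              (fun s hs => hmle (c s) (hcJ s hs.1))
          have hconst : (∫ s in (0:ℝ)..t, m) = m * t := by
            simp [mul_comm]
          have : m * t ≤ A t := by rw [← hconst]; exact hcmp
          exact Real.exp_le_exp.2 (by linarith)
        have hexpint : IntegrableOn (fun t => Real.exp (-(m * t))) (Ioi (0:ℝ)) := by
          simpa [neg_mul] using exp_neg_integrableOn_Ioi 0 hm
        have hbnd : ∀ (I : ℝ → ℝ) (C : ℝ), 0 ≤ C → Continuous I →
            (∀ t, 0 < t → |I t| ≤ C * Real.exp (-(m * t))) → IntegrableOn I (Ioi 0) := by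
          intro I C hC hIc hIb
          refine Integrable.mono' (hexpint.const_mul C)
            hIc.aestronglyMeasurable.restrict ?_
          rw [ae_restrict_iff' measurableSet_Ioi]
          filter_upwards with t ht
          simpa [Real.norm_eq_abs] using hIb t ht
        refine ⟨hbnd I1 C1 hC1nn hI1cont ?_, hbnd I2 C2 hC2nn hI2cont ?_, ?_⟩
        · intro t ht
          calc |I1 t| = E t * |deriv g (c t)| := by
                simp only [hI1def]; rw [abs_mul, abs_of_pos (hEpos t)]
            _ ≤ Real.exp (-(m * t)) * C1 :=
              mul_le_mul (hEexp t ht.le) (hC1 _) (abs_nonneg _) (Real.exp_pos _).le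
            _ = C1 * Real.exp (-(m * t)) := mul_comm _ _
        · intro t ht
          calc |I2 t| = E t * |(f (c t) + deriv b (c t)) / b (c t) * g (c t)| := by
                simp only [hI2def]; rw [mul_assoc, abs_mul, abs_of_pos (hEpos t)]
            _ ≤ Real.exp (-(m * t)) * C2 :=
              mul_le_mul (hEexp t ht.le) (hC2 _) (abs_nonneg _) (Real.exp_pos _).le
            _ = C2 * Real.exp (-(m * t)) := mul_comm _ _
        · -- decay of F
          have hFb : ∀ᶠ t in atTop, ‖F t‖ ≤ (Cg / ε) * Real.exp (-(m * t)) := by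
            filter_upwards [eventually_ge_atTop (0:ℝ)] with t ht
            by_cases hx : c t ∈ K
            · have hbx : ε ≤ |b (c t)| := hsupp hx
              have h2 : |g (c t) / b (c t)| ≤ Cg / ε := by
                rw [abs_div]
                exact div_le_div₀ hCgnn (hCg _) hε hbx
              have hstep : ‖F t‖ = E t * |g (c t) / b (c t)| := by
                simp only [hFdef]; rw [Real.norm_eq_abs, abs_mul, abs_of_pos (hEpos t)]
              calc ‖F t‖ = E t * |g (c t) / b (c t)| := hstep
                _ ≤ Real.exp (-(m * t)) * (Cg / ε) :=
                  mul_le_mul (hEexp t ht) h2 (abs_nonneg _) (Real.exp_pos _).le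
                _ = (Cg / ε) * Real.exp (-(m * t)) := mul_comm _ _
            · have : g (c t) = 0 := image_eq_zero_of_notMem_tsupport hx
              simp only [hFdef, this, zero_div, mul_zero, norm_zero]
              positivity
          have hlim : Tendsto (fun t : ℝ => (Cg / ε) * Real.exp (-(m * t)))
              atTop (nhds 0) := by
            have h1 : Tendsto (fun t : ℝ => m * t) atTop atTop :=
              Tendsto.const_mul_atTop hm tendsto_id
            have h2 : Tendsto (fun t : ℝ => Real.exp (-(m * t))) atTop (nhds 0) :=
              Real.tendsto_exp_neg_atTop_nhds_zero.comp h1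
            simpa using h2.const_mul (Cg / ε)
          exact squeeze_zero_norm' hFb hlim
    obtain ⟨hint1, hint2, htend⟩ := key
    -- integration by parts via the fundamental theorem of calculus on [0, ∞)
    have hIBP : (∫ t in Ioi (0:ℝ), (I1 t - I2 t)) = 0 - F 0 :=
      integral_Ioi_of_hasDerivAt_of_tendsto hFcont.continuousWithinAt hFderiv
        (hint1.sub hint2) htend
    rw [integral_sub hint1 hint2, hF0, zero_sub] at hIBP
    have hI : (∫ t in Ioi (0:ℝ), I1 t) = -(g y / b y) + ∫ t in Ioi (0:ℝ), I2 t := by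
      linarith
    -- transfer from the truncated flow `c` back to `γ`
    have heqA : ∀ t : ℝ, 0 < t → (∫ s in (0:ℝ)..t, f (γ s y)) = A t := by
      intro t ht
      apply intervalIntegral.integral_congr
      intro s hs
      rw [uIcc_of_le ht.le] at hs
      show f (γ s y) = f (c s)
      rw [hceq s hs.1]
    have heq1 : EqOn (fun t => Real.exp (-∫ s in (0:ℝ)..t, f (γ s y)) * deriv g (γ t y))
        I1 (Ioi 0) := by
      intro t ht
      simp only [hI1def, hEdef]
      rw [← hceq t ht.out.le, heqA t ht.out]
    have heq2 : EqOn (fun t => Real.exp (-∫ s in (0:ℝ)..t, f (γ s y)) *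
        ((f (γ t y) + deriv b (γ t y)) / b (γ t y)) * g (γ t y)) I2 (Ioi 0) := by
      intro t ht
      simp only [hI2def, hEdef]
      rw [← hceq t ht.out.le, heqA t ht.out]
    refine ⟨(integrableOn_congr_fun heq1 measurableSet_Ioi).2 hint1,
      (integrableOn_congr_fun heq2 measurableSet_Ioi).2 hint2, ?_⟩
    rw [setIntegral_congr_fun measurableSet_Ioi heq1,
      setIntegral_congr_fun measurableSet_Ioi heq2, hI]
end

section
/- For every ε > 0 and every g ∈ C_c^∞(ℝ) with supp g ⊆ {x ∈ ℝ : |b(x)| ≥ ε}, one has |∫ g' dm| ≤ (1/ε) · (∫ f dm + sup_{x ∈ supp g}(f(x) + |b'(x)|)) · ‖g‖_∞. -/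
open MeasureTheory Set Filter

lemma aux_flow_integral
    (b : ℝ → ℝ) (γ : ℝ → ℝ → ℝ)
    (hγ0 : ∀ x : ℝ, γ 0 x = x)
    (hγ : ∀ (x t : ℝ), 0 ≤ t → HasDerivAt (fun s => γ s x) (b (γ t x)) t)
    (f : ℝ → ℝ) (hfc : Continuous f) (hfpos : ∀ x, 0 < f x)
    (u D h : ℝ → ℝ)
    (hu : ∀ x, HasDerivAt u (D x) x)
    (hh : ∀ x, h x = D x * b x - f x * u x)
    (hhc : Continuous h)
    (Mu Kc : ℝ)
    (hub : ∀ x, |u x| ≤ Mu)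
    (hhb : ∀ x, |h x| ≤ Kc * f x)
    (y : ℝ)
    (hdiv : (∫⁻ s in Ioi (0:ℝ), ENNReal.ofReal (f (γ s y))) = ⊤) :
    IntegrableOn (fun t => Real.exp (-∫ s in (0:ℝ)..t, f (γ s y)) * h (γ t y)) (Ioi 0)
    ∧ (∫ t in Ioi (0:ℝ), Real.exp (-∫ s in (0:ℝ)..t, f (γ s y)) * h (γ t y)) = - u y := by
  set φ : ℝ → ℝ := fun s => γ s y with hφdef
  set F : ℝ → ℝ := fun t => ∫ s in (0:ℝ)..t, f (φ s) with hFdef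
  set E : ℝ → ℝ := fun t => Real.exp (-F t) with hEdef
  have hKc0 : 0 ≤ Kc := by
    have h1 := hhb y
    have h2 := abs_nonneg (h y)
    nlinarith [hfpos y]
  have hφcont : ContinuousOn φ (Ici 0) :=
    fun s hs => (hγ y s hs).continuousAt.continuousWithinAt
  have hfφ : ContinuousOn (fun s => f (φ s)) (Ici 0) := hfc.comp_continuousOn hφcont
  have hInt : ∀ T : ℝ, 0 ≤ T → IntervalIntegrable (fun s => f (φ s)) volume 0 T :=
    fun T hT => (hfφ.mono (Icc_subset_Ici_self)).intervalIntegrable_of_Icc hT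
  have hIntTT : ∀ T T' : ℝ, 0 ≤ T → T ≤ T' →
      IntervalIntegrable (fun s => f (φ s)) volume T T' := by
    intro T T' hT hTT'
    exact (hfφ.mono (fun x hx => le_trans hT hx.1 : Icc T T' ⊆ Ici 0)).intervalIntegrable_of_Icc hTT'
  have hF0 : F 0 = 0 := intervalIntegral.integral_same
  have hFmono : ∀ T T' : ℝ, 0 ≤ T → T ≤ T' → F T ≤ F T' := by
    intro T T' hT hTT'
    have hadd := intervalIntegral.integral_add_adjacent_intervals (hInt T hT) (hIntTT T T' hT hTT')
    have hpos : 0 ≤ ∫ s in T..T', f (φ s) :=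
      intervalIntegral.integral_nonneg hTT' (fun s _ => (hfpos _).le)
    simp only [hFdef]
    rw [← hadd]
    linarith
  have hF0le : ∀ T : ℝ, 0 ≤ T → 0 ≤ F T := fun T hT => hF0 ▸ hFmono 0 T le_rfl hT
  have hFderiv : ∀ t : ℝ, 0 < t → HasDerivAt F (f (φ t)) t := by
    intro t ht
    refine intervalIntegral.integral_hasDerivAt_right (hInt t ht.le)
      ⟨Ioi 0, Ioi_mem_nhds ht, ((hfφ.mono Ioi_subset_Ici_self).aestronglyMeasurable measurableSet_Ioi)⟩
      (hfc.continuousAt.comp (hγ y t ht.le).continuousAt)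
  have hEderiv : ∀ t : ℝ, 0 < t → HasDerivAt E (-(f (φ t)) * E t) t := by
    intro t ht
    have := ((hFderiv t ht).neg).exp
    simpa [hEdef, mul_comm] using this
  have hψderiv : ∀ t : ℝ, 0 < t →
      HasDerivAt (fun t => E t * u (φ t)) (E t * h (φ t)) t := by
    intro t ht
    have hd2 : HasDerivAt (fun t => u (φ t)) (D (φ t) * b (φ t)) t :=
      (hu (φ t)).comp t (hγ y t ht.le)
    have := (hEderiv t ht).mul hd2
    refine this.congr_deriv ?_
    rw [hh (φ t)]; ring
  have hFcont : ∀ T : ℝ, 0 ≤ T → ContinuousOn F (Icc 0 T) := by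
    intro T hT
    have h1 : IntegrableOn (fun s => f (φ s)) (uIcc 0 T) := by
      rw [uIcc_of_le hT]
      exact (hfφ.mono Icc_subset_Ici_self).integrableOn_compact isCompact_Icc
    have := intervalIntegral.continuousOn_primitive_interval h1
    rw [uIcc_of_le hT] at this
    exact this
  have hEcont : ∀ T : ℝ, 0 ≤ T → ContinuousOn E (Icc 0 T) := by
    intro T hT
    exact Real.continuous_exp.comp_continuousOn (hFcont T hT).neg
  have hφIcc : ∀ T : ℝ, 0 ≤ T → ContinuousOn φ (Icc 0 T) :=
    fun T hT => hφcont.mono Icc_subset_Ici_self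
  have hXcont : ∀ T : ℝ, 0 ≤ T → ContinuousOn (fun t => E t * h (φ t)) (Icc 0 T) := by
    intro T hT
    exact (hEcont T hT).mul (hhc.comp_continuousOn (hφIcc T hT))
  have hYcont : ∀ T : ℝ, 0 ≤ T → ContinuousOn (fun t => E t * f (φ t)) (Icc 0 T) := by
    intro T hT
    exact (hEcont T hT).mul (hfc.comp_continuousOn (hφIcc T hT))
  have hucont : Continuous u := by
    rw [continuous_iff_continuousAt]; exact fun x => (hu x).continuousAt
  have hφ0 : φ 0 = y := hγ0 y
  have hE0 : E 0 = 1 := by simp [hEdef, hF0]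
  have hFTC : ∀ T : ℝ, 0 ≤ T →
      (∫ t in (0:ℝ)..T, E t * h (φ t)) = E T * u (φ T) - u y := by
    intro T hT
    have := intervalIntegral.integral_eq_sub_of_hasDeriv_right_of_le hT
      ((hEcont T hT).mul (hucont.comp_continuousOn (hφIcc T hT)))
      (fun t ht => (hψderiv t ht.1).hasDerivWithinAt)
      ((hXcont T hT).intervalIntegrable_of_Icc hT)
    rw [this]; simp [Function.comp, hφ0, hE0]
  have hFTCf : ∀ T : ℝ, 0 ≤ T →
      (∫ t in (0:ℝ)..T, E t * f (φ t)) = 1 - E T := by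
    intro T hT
    have hd : ∀ t ∈ Ioo 0 T, HasDerivWithinAt (fun t => -E t) (E t * f (φ t)) (Ioi t) t := by
      intro t ht
      have := (hEderiv t ht.1).neg
      have h2 : -(-f (φ t) * E t) = E t * f (φ t) := by ring
      rw [h2] at this
      exact this.hasDerivWithinAt
    have := intervalIntegral.integral_eq_sub_of_hasDeriv_right_of_le hT
      ((hEcont T hT).neg) hd ((hYcont T hT).intervalIntegrable_of_Icc hT)
    rw [this, Pi.neg_apply, Pi.neg_apply, hE0]; ring
  have hEpos : ∀ t, 0 < E t := fun t => Real.exp_pos _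
  have hnorm : ∀ T : ℝ, 0 ≤ T → (∫ t in (0:ℝ)..T, ‖E t * h (φ t)‖) ≤ Kc := by
    intro T hT
    have hle : ∀ t ∈ Icc (0:ℝ) T, ‖E t * h (φ t)‖ ≤ Kc * (E t * f (φ t)) := by
      intro t ht
      have h1 : ‖E t * h (φ t)‖ = E t * |h (φ t)| := by
        rw [norm_mul, Real.norm_eq_abs, Real.norm_eq_abs, abs_of_pos (hEpos t)]
      rw [h1]
      calc E t * |h (φ t)| ≤ E t * (Kc * f (φ t)) := by
            exact mul_le_mul_of_nonneg_left (hhb _) (hEpos t).le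
        _ = Kc * (E t * f (φ t)) := by ring
    have hmono := intervalIntegral.integral_mono_on (μ := volume) hT
      (((hXcont T hT).norm).intervalIntegrable_of_Icc hT)
      ((continuousOn_const.mul (hYcont T hT)).intervalIntegrable_of_Icc hT)
      hle
    have heq : (∫ t in (0:ℝ)..T, Kc * (E t * f (φ t))) = Kc * (1 - E T) := by
      rw [intervalIntegral.integral_const_mul, hFTCf T hT]
    calc (∫ t in (0:ℝ)..T, ‖E t * h (φ t)‖) ≤ ∫ t in (0:ℝ)..T, Kc * (E t * f (φ t)) := hmono
      _ = Kc * (1 - E T) := heq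
      _ ≤ Kc * 1 := by nlinarith [hEpos T]
      _ = Kc := mul_one Kc
  have hIntOn : IntegrableOn (fun t => E t * h (φ t)) (Ioi (0:ℝ)) := by
    refine integrableOn_Ioi_of_intervalIntegral_norm_bounded Kc 0
      (fun n : ℕ => ?_) tendsto_natCast_atTop_atTop ?_
    · exact ((hXcont n n.cast_nonneg).integrableOn_compact isCompact_Icc).mono_set
        Ioc_subset_Icc_self
    · exact Eventually.of_forall (fun n => hnorm n n.cast_nonneg)
  have hFtop : Tendsto F atTop atTop := by
    rw [tendsto_atTop]
    intro C
    have hex : ∃ T : ℝ, 0 ≤ T ∧ C ≤ F T := by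
      by_contra hcon
      push_neg at hcon
      have hfin : IntegrableOn (fun s => f (φ s)) (Ioi (0:ℝ)) := by
        refine integrableOn_Ioi_of_intervalIntegral_norm_bounded C 0
          (fun n : ℕ => ?_) tendsto_natCast_atTop_atTop ?_
        · exact (((hfφ.mono Icc_subset_Ici_self).integrableOn_compact
            isCompact_Icc)).mono_set Ioc_subset_Icc_self
        · refine Eventually.of_forall (fun n => ?_)
          have heq : (∫ s in (0:ℝ)..(n:ℝ), ‖f (φ s)‖) = F n := by
            apply intervalIntegral.integral_congr
            intro s _
            exact Real.norm_of_nonneg (hfpos _).le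
          rw [heq]
          exact (hcon (n:ℝ) n.cast_nonneg).le
      have hlt : (∫⁻ s in Ioi (0:ℝ), (‖f (φ s)‖₊ : ENNReal)) < ⊤ := hfin.2
      have heq : ∀ s : ℝ, (‖f (φ s)‖₊ : ENNReal) = ENNReal.ofReal (f (φ s)) := by
        intro s
        exact Real.enorm_eq_ofReal (hfpos _).le
      simp only [heq] at hlt
      rw [hdiv] at hlt
      exact (lt_irrefl _ hlt).elim
    obtain ⟨T, hT0, hTC⟩ := hex
    filter_upwards [eventually_ge_atTop T] with t ht
    exact le_trans hTC (hFmono T t hT0 ht)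
  have hEtend : Tendsto E atTop (nhds 0) := by
    have h1 : Tendsto (fun t => -F t) atTop atBot := tendsto_neg_atBot_iff.mpr hFtop
    exact Real.tendsto_exp_atBot.comp h1
  have hψtend : Tendsto (fun T => E T * u (φ T)) atTop (nhds 0) := by
    have hMu0 : 0 ≤ Mu := le_trans (abs_nonneg _) (hub y)
    refine squeeze_zero_norm (a := fun T => Mu * E T) (fun T => ?_) ?_
    · show ‖E T * u (φ T)‖ ≤ Mu * E T
      rw [norm_mul, Real.norm_eq_abs, Real.norm_eq_abs, abs_of_pos (hEpos T)]
      calc E T * |u (φ T)| ≤ E T * Mu := mul_le_mul_of_nonneg_left (hub _) (hEpos T).le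
        _ = Mu * E T := mul_comm _ _
    · have := hEtend.const_mul Mu
      simpa using this
  have hlim : Tendsto (fun T : ℝ => ∫ t in (0:ℝ)..T, E t * h (φ t)) atTop
      (nhds (∫ t in Ioi (0:ℝ), E t * h (φ t))) :=
    intervalIntegral_tendsto_integral_Ioi 0 hIntOn tendsto_id
  have hlim2 : Tendsto (fun T : ℝ => ∫ t in (0:ℝ)..T, E t * h (φ t)) atTop
      (nhds (0 - u y)) := by
    have h2 : Tendsto (fun T => E T * u (φ T) - u y) atTop (nhds (0 - u y)) :=
      hψtend.sub_const _
    refine h2.congr' ?_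
    filter_upwards [eventually_ge_atTop (0:ℝ)] with T hT
    exact (hFTC T hT).symm
  have hval : (∫ t in Ioi (0:ℝ), E t * h (φ t)) = - u y := by
    have := tendsto_nhds_unique hlim hlim2
    rw [this]; ring
  exact ⟨hIntOn, hval⟩


/-- For every `ε > 0` and every `g ∈ C_c^∞(ℝ)` supported in `{|b| ≥ ε}`,
`|∫ g' dm| ≤ (1/ε) (∫ f dm + sup_{x ∈ supp g} (f x + |b' x|)) ‖g‖_∞`,
where `m` is a probability measure satisfying the representation identity of the
invariant measure of the one-dimensional PDMP. -/
theorem invariant_measure_derivative_bound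
    (B : ℝ) (hB : 0 < B) (b : ℝ → ℝ)
    (hb : ContDiff ℝ 1 b) (hb' : ∀ v : ℝ, |deriv b v| ≤ B)
    (γ : ℝ → ℝ → ℝ)
    (hγ0 : ∀ x : ℝ, γ 0 x = x)
    (hγ : ∀ (x t : ℝ), 0 ≤ t → HasDerivAt (fun s => γ s x) (b (γ t x)) t)
    (f : ℝ → ℝ) (hfpos : ∀ x, 0 < f x) (hfLip : ∃ L : NNReal, LipschitzWith L f)
    (hfdiv : ∀ x : ℝ, (∫⁻ s in Ioi (0:ℝ), ENNReal.ofReal (f (γ s x))) = ⊤)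
    (a : ℝ → ℝ) (ha : Measurable a)
    (m : Measure ℝ) [IsProbabilityMeasure m] (hfint : Integrable f m)
    (hrep : ∀ g : ℝ → ℝ, Measurable g → (∃ C, ∀ x, |g x| ≤ C) →
      ∫ x, g x ∂m
        = ∫ x, (f x *
            ∫ t in Ioi (0:ℝ),
              Real.exp (-∫ s in (0:ℝ)..t, f (γ s (x + a x))) * g (γ t (x + a x))) ∂m)
    (ε : ℝ) (hε : 0 < ε)
    (g : ℝ → ℝ) (hg : ContDiff ℝ (⊤ : ℕ∞) g) (hgc : HasCompactSupport g)
    (hsupp : tsupport g ⊆ {x : ℝ | ε ≤ |b x|}) :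
    |∫ x, deriv g x ∂m|
      ≤ (1 / ε) * ((∫ x, f x ∂m) + ⨆ x ∈ tsupport g, (f x + |deriv b x|)) *
          (⨆ x : ℝ, |g x|) := by
  obtain ⟨L, hL⟩ := hfLip
  have hfc : Continuous f := hL.continuous
  have hbc : Continuous b := hb.continuous
  have hb'c : Continuous (deriv b) := hb.continuous_deriv le_rfl
  have hgcont : Continuous g := hg.continuous
  have hg'c : Continuous (deriv g) := hg.continuous_deriv (by exact_mod_cast le_top)
  have hgdiff : ∀ x, HasDerivAt g (deriv g x) x :=
    fun x => ((hg.differentiable (by simp)) x).hasDerivAt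
  have hbdiff : ∀ v, HasDerivAt b (deriv b v) v :=
    fun v => ((hb.differentiable one_ne_zero) v).hasDerivAt
  set K : Set ℝ := tsupport g with hKdef
  have hKclosed : IsClosed K := isClosed_tsupport g
  have hKcompact : IsCompact K := hgc
  have hg0 : ∀ x, x ∉ K → g x = 0 := fun x hx => image_eq_zero_of_notMem_tsupport hx
  have hg'0 : ∀ x, x ∉ K → deriv g x = 0 := by
    intro x hx
    by_contra hne
    exact hx (support_deriv_subset (by simpa using hne))
  have hbK : ∀ x ∈ K, ε ≤ |b x| := fun x hx => hsupp hx
  have hbne : ∀ x ∈ K, b x ≠ 0 := by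
    intro x hx h0
    have := hbK x hx
    rw [h0, abs_zero] at this
    linarith
  set u : ℝ → ℝ := fun x => if b x = 0 then 0 else g x / b x with hudef
  set D : ℝ → ℝ := fun x => if b x = 0 then 0 else
    (deriv g x * b x - g x * deriv b x) / (b x)^2 with hDdef
  set h : ℝ → ℝ := fun x => D x * b x - f x * u x with hhdef
  have hOopen : IsOpen {x : ℝ | b x ≠ 0} := isOpen_ne.preimage hbc
  have huK : ∀ x, x ∉ K → u x = 0 := by
    intro x hx
    by_cases h0 : b x = 0
    · simp [hudef, h0]
    · simp [hudef, h0, hg0 x hx]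
  have hu_loc : ∀ x, b x ≠ 0 → u =ᶠ[nhds x] fun y => g y / b y := by
    intro x hx
    filter_upwards [hOopen.mem_nhds hx] with y hy
    simp [hudef, hy]
  have hu_loc0 : ∀ x, b x = 0 → u =ᶠ[nhds x] fun _ => 0 := by
    intro x hx
    have hxK : x ∉ K := fun hmem => hbne x hmem hx
    filter_upwards [hKclosed.isOpen_compl.mem_nhds hxK] with y hy
    exact huK y hy
  have hu : ∀ x, HasDerivAt u (D x) x := by
    intro x
    by_cases h0 : b x = 0
    · have : HasDerivAt (fun _ : ℝ => (0:ℝ)) 0 x := hasDerivAt_const x 0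
      have h2 := this.congr_of_eventuallyEq (hu_loc0 x h0)
      simpa [hDdef, h0] using h2
    · have hd : HasDerivAt (fun y => g y / b y)
          ((deriv g x * b x - g x * deriv b x) / (b x)^2) x :=
        (hgdiff x).div (hbdiff x) h0
      have h2 := hd.congr_of_eventuallyEq (hu_loc x h0)
      simpa [hDdef, h0] using h2
  have hucont : Continuous u := by
    rw [continuous_iff_continuousAt]; exact fun x => (hu x).continuousAt
  have hDcont : Continuous D := by
    rw [continuous_iff_continuousAt]
    intro x
    by_cases h0 : b x = 0
    · have hxK : x ∉ K := fun hmem => hbne x hmem h0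
      have heq : D =ᶠ[nhds x] fun _ => 0 := by
        filter_upwards [hKclosed.isOpen_compl.mem_nhds hxK] with y hy
        by_cases h1 : b y = 0
        · simp [hDdef, h1]
        · simp [hDdef, h1, hg0 y hy, hg'0 y hy]
      exact continuousAt_const.congr heq.symm
    · have heq : D =ᶠ[nhds x] fun y => (deriv g y * b y - g y * deriv b y) / (b y)^2 := by
        filter_upwards [hOopen.mem_nhds h0] with y hy
        simp [hDdef, hy]
      have hc : ContinuousAt (fun y => (deriv g y * b y - g y * deriv b y) / (b y)^2) x :=
        ContinuousAt.div ((hg'c.mul hbc).sub (hgcont.mul hb'c)).continuousAt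
          (hbc.pow 2).continuousAt (pow_ne_zero 2 h0)
      exact hc.congr heq.symm
  have hhcont : Continuous h := (hDcont.mul hbc).sub (hfc.mul hucont)
  have hhK : ∀ x, x ∉ K → h x = 0 := by
    intro x hx
    by_cases h0 : b x = 0
    · simp [hhdef, hDdef, hudef, h0]
    · simp [hhdef, hDdef, hudef, h0, hg0 x hx, hg'0 x hx]
  have hhcs : HasCompactSupport h := HasCompactSupport.intro hKcompact hhK
  obtain ⟨Ch, hCh⟩ := hhcs.exists_bound_of_continuous hhcont
  have hCh' : ∀ x, |h x| ≤ Ch := fun x => by simpa [Real.norm_eq_abs] using hCh x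
  -- bound |h| ≤ Kc * f
  obtain ⟨Kc, hKcf⟩ : ∃ Kc : ℝ, ∀ x, |h x| ≤ Kc * f x := by
    rcases eq_empty_or_nonempty K with hKe | hKne
    · refine ⟨0, fun x => ?_⟩
      have : x ∉ K := by rw [hKe]; exact notMem_empty x
      simp [hhK x this]
    · obtain ⟨x₀, hx₀K, hx₀min⟩ := hKcompact.exists_isMinOn hKne (hfc.continuousOn)
      set c : ℝ := f x₀ with hcdef
      have hc0 : 0 < c := hfpos x₀
      have hCh0 : 0 ≤ Ch := le_trans (abs_nonneg _) (hCh' 0)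
      refine ⟨Ch / c, fun x => ?_⟩
      by_cases hxK : x ∈ K
      · calc |h x| ≤ Ch := hCh' x
          _ = (Ch / c) * c := by field_simp
          _ ≤ (Ch / c) * f x := by
              exact mul_le_mul_of_nonneg_left (hx₀min hxK) (div_nonneg hCh0 hc0.le)
      · rw [hhK x hxK, abs_zero]
        exact mul_nonneg (div_nonneg hCh0 hc0.le) (hfpos x).le
  -- sup bounds
  set M : ℝ := ⨆ x : ℝ, |g x| with hMdef
  obtain ⟨Cg, hCg⟩ := hgc.exists_bound_of_continuous hgcont
  have hMbdd : BddAbove (Set.range fun x => |g x|) :=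
    ⟨Cg, by rintro _ ⟨x, rfl⟩; simpa [Real.norm_eq_abs] using hCg x⟩
  have hgM : ∀ x, |g x| ≤ M := fun x => le_ciSup hMbdd x
  have hM0 : 0 ≤ M := le_trans (abs_nonneg _) (hgM 0)
  have hub : ∀ x, |u x| ≤ M / ε := by
    intro x
    by_cases h0 : b x = 0
    · simp only [hudef]; rw [if_pos h0, abs_zero]
      exact div_nonneg hM0 hε.le
    · by_cases hxK : x ∈ K
      · simp only [hudef]; rw [if_neg h0, abs_div]
        exact div_le_div₀ hM0 (hgM x) hε (hbK x hxK)
      · rw [huK x hxK, abs_zero]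
        exact div_nonneg hM0 hε.le
  set S : ℝ := ⨆ x ∈ K, (f x + |deriv b x|) with hSdef
  obtain ⟨Cs, hCs⟩ := hKcompact.exists_bound_of_continuousOn
    ((hfc.add hb'c.abs).continuousOn (s := K))
  have hSbdd : BddAbove (Set.range fun x => ⨆ _ : x ∈ K, (f x + |deriv b x|)) := by
    refine ⟨max Cs 0, ?_⟩
    rintro _ ⟨x, rfl⟩
    dsimp only
    by_cases hxK : x ∈ K
    · rw [ciSup_pos hxK]
      exact le_trans (le_abs_self _) (le_trans (by
        simpa [Real.norm_eq_abs] using hCs x hxK) (le_max_left _ _))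
    · simp [hxK, Real.iSup_of_isEmpty]
  have hSK : ∀ x ∈ K, f x + |deriv b x| ≤ S := by
    intro x hx
    have := le_ciSup hSbdd x
    rwa [ciSup_pos hx] at this
  have hS0 : 0 ≤ S := by
    by_cases h0 : (0:ℝ) ∈ K
    · exact le_trans (add_nonneg (hfpos 0).le (abs_nonneg _)) (hSK 0 h0)
    · have := le_ciSup hSbdd 0
      simpa [h0] using (le_trans (le_of_eq (by simp [h0])) this)
  -- apply the flow lemma
  have haux := fun y : ℝ => aux_flow_integral b γ hγ0 hγ f hfc hfpos u D h hu
    (fun x => rfl) hhcont (M / ε) Kc hub hKcf y (hfdiv y)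
  -- integrability under m
  obtain ⟨Cg', hCg'⟩ := (hgc.deriv).exists_bound_of_continuous hg'c
  have hder_int : Integrable (fun x => deriv g x) m :=
    Integrable.mono' (integrable_const Cg') hg'c.aestronglyMeasurable
      (Filter.Eventually.of_forall fun x => hCg' x)
  have hh_int : Integrable h m :=
    Integrable.mono' (integrable_const Ch) hhcont.aestronglyMeasurable
      (Filter.Eventually.of_forall fun x => hCh x)
  set h₂ : ℝ → ℝ := fun x => deriv g x - h x with hh₂def
  have hh₂_int : Integrable h₂ m := hder_int.sub hh_int
  have hsplit : (∫ x, deriv g x ∂m) = (∫ x, h₂ x ∂m) + ∫ x, h x ∂m := by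
    rw [← integral_add hh₂_int hh_int]
    congr 1
    funext x
    simp [hh₂def]
  -- representation identity applied to h
  have hreph := hrep h hhcont.measurable ⟨Ch, hCh'⟩
  have hinner : (∫ x, (f x *
      ∫ t in Ioi (0:ℝ),
        Real.exp (-∫ s in (0:ℝ)..t, f (γ s (x + a x))) * h (γ t (x + a x))) ∂m)
      = ∫ x, f x * -(u (x + a x)) ∂m := by
    congr 1
    funext x
    rw [(haux (x + a x)).2]
  rw [hinner] at hreph
  -- bound on ∫ h dm
  have hbound1 : |∫ x, h x ∂m| ≤ (M / ε) * ∫ x, f x ∂m := by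
    rw [hreph]
    have h1 : |∫ x, f x * -(u (x + a x)) ∂m| ≤ ∫ x, |f x * -(u (x + a x))| ∂m :=
      norm_integral_le_integral_norm (μ := m) (f := fun x => f x * -(u (x + a x)))
    have h2 : (∫ x, |f x * -(u (x + a x))| ∂m) ≤ ∫ x, (M / ε) * f x ∂m := by
      refine integral_mono_of_nonneg (Filter.Eventually.of_forall fun x => abs_nonneg _)
        (hfint.const_mul _) (Filter.Eventually.of_forall fun x => ?_)
      show |f x * -(u (x + a x))| ≤ (M / ε) * f x
      rw [abs_mul, abs_neg, abs_of_pos (hfpos x)]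
      calc f x * |u (x + a x)| ≤ f x * (M / ε) :=
            mul_le_mul_of_nonneg_left (hub _) (hfpos x).le
        _ = (M / ε) * f x := mul_comm _ _
    have h3 : (∫ x, (M / ε) * f x ∂m) = (M / ε) * ∫ x, f x ∂m := integral_const_mul _ _
    linarith
  -- pointwise bound on h₂
  have hbound2p : ∀ x, |h₂ x| ≤ M * S / ε := by
    intro x
    by_cases hxK : x ∈ K
    · have hbx := hbne x hxK
      have hval : h₂ x = g x * (deriv b x + f x) / b x := by
        simp only [hh₂def, hhdef, hudef, hDdef, if_neg hbx]
        field_simp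
        ring
      rw [hval, abs_div, abs_mul]
      have hnum : |g x| * |deriv b x + f x| ≤ M * S := by
        refine mul_le_mul (hgM x) ?_ (abs_nonneg _) hM0
        calc |deriv b x + f x| ≤ |deriv b x| + |f x| := abs_add_le _ _
          _ = f x + |deriv b x| := by rw [abs_of_pos (hfpos x)]; ring
          _ ≤ S := hSK x hxK
      exact div_le_div₀ (mul_nonneg hM0 hS0) hnum hε (hbK x hxK)
    · have : h₂ x = 0 := by simp [hh₂def, hg'0 x hxK, hhK x hxK]
      rw [this, abs_zero]
      positivity
  have hbound2 : |∫ x, h₂ x ∂m| ≤ M * S / ε := by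
    have h1 : |∫ x, h₂ x ∂m| ≤ ∫ x, |h₂ x| ∂m :=
      norm_integral_le_integral_norm (μ := m) (f := h₂)
    have h2 : (∫ x, |h₂ x| ∂m) ≤ ∫ _x, (M * S / ε) ∂m := by
      refine integral_mono_of_nonneg (Filter.Eventually.of_forall fun x => abs_nonneg _)
        (integrable_const _) (Filter.Eventually.of_forall hbound2p)
    have h3 : (∫ _x, (M * S / ε) ∂m) = M * S / ε := by
      simp [measure_univ]
    linarith
  have hfi0 : 0 ≤ ∫ x, f x ∂m :=
    integral_nonneg fun x => (hfpos x).le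
  calc |∫ x, deriv g x ∂m| = |(∫ x, h₂ x ∂m) + ∫ x, h x ∂m| := by rw [hsplit]
    _ ≤ |∫ x, h₂ x ∂m| + |∫ x, h x ∂m| := abs_add_le _ _
    _ ≤ M * S / ε + (M / ε) * ∫ x, f x ∂m := add_le_add hbound2 hbound1
    _ = (1 / ε) * ((∫ x, f x ∂m) + S) * M := by ring
end

section
/- For every n ≥ 0, every choice of indices i_0,…,i_n ∈ {1,…,N}, every ε > 0, every x ∈ ℝ^N and every Borel set B ⊆ ℝ^N, the (n+1)-fold iterate of the jump-chain kernel satisfies K^{n+1}(x, B) ≥ (f_{i_0}(x)/f̄(x)) ∫_0^ε ⋯ ∫_0^ε (∏_{k=1}^n [e(x_{k−1}, t_k) f_{i_k}(γ_{t_k}(x_{k−1}))]) · f̄(γ_{t_{n+1}}(x_n)) e(x_n, t_{n+1}) · 1_B(η(t_1,…,t_{n+1})) dt_1 ⋯ dt_{n+1}, where x_0 = Δ_{i_0}(x), x_k = Δ_{i_k}(γ_{t_k}(x_{k−1})) for 1 ≤ k ≤ n, and η(t_1,…,t_{n+1}) = γ_{t_{n+1}}(x_n). -/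
set_option maxHeartbeats 1000000


open MeasureTheory Set ProbabilityTheory Filter
open scoped ENNReal

noncomputable section

/-- `pdmpChain γ Δ x t k = x_k` where `x_0 = Δ_{i_0}(x)` and
`x_{k} = Δ_{i_k}(γ_{t_k}(x_{k-1}))`; here `Δ k` stands for `Δ_{i_k}` and the time vector is
0-indexed, i.e. `t k` stands for `t_{k+1}`. -/
def pdmpChain {E : Type*} (γ : ℝ → E → E) (Δ : ℕ → E → E) (x : E) (t : ℕ → ℝ) : ℕ → E
  | 0 => Δ 0 x
  | k + 1 => Δ (k + 1) (γ (t k) (pdmpChain γ Δ x t k))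

namespace PdmpAux

/-- truncated flow, jointly continuous -/
def gm {α : Type*} (γ : ℝ → α → α) : ℝ → α → α := fun t x => γ (max t 0) x

variable {N : ℕ}

def fb (f : Fin N → (Fin N → ℝ) → ℝ) : (Fin N → ℝ) → ℝ := fun x => ∑ j, f j x

theorem gm_of_nonneg {α : Type*} (γ : ℝ → α → α) {t : ℝ} (ht : 0 ≤ t) (x : α) :
    gm γ t x = γ t x := by simp [gm, max_eq_left ht]

theorem continuous_gm
    {b : (Fin N → ℝ) → (Fin N → ℝ)} {L : NNReal} (hbLip : LipschitzWith L b)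
    {γ : ℝ → (Fin N → ℝ) → (Fin N → ℝ)}
    (hγ0 : ∀ x, γ 0 x = x)
    (hγ : ∀ x t, 0 ≤ t → HasDerivAt (fun s => γ s x) (b (γ t x)) t) :
    Continuous fun p : ℝ × (Fin N → ℝ) => gm γ p.1 p.2 := by
  have hct : ∀ x, Continuous fun t => gm γ t x := by
    intro x
    have hco : ContinuousOn (fun s => γ s x) (Ici 0) := fun s hs =>
      ((hγ x s hs).continuousAt).continuousWithinAt
    exact hco.comp_continuous (continuous_id.max continuous_const) fun t => Set.mem_Ici.2 (le_max_right _ _)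
  have hdist : ∀ t : ℝ, 0 ≤ t → ∀ x y : Fin N → ℝ,
      dist (γ t x) (γ t y) ≤ dist x y * Real.exp (L * t) := by
    intro t ht x y
    have h := dist_le_of_trajectories_ODE (v := fun _ => b) (fun _ => hbLip)
      (f := fun s => γ s x) (g := fun s => γ s y) (a := 0) (b := t)
      (fun s hs => ((hγ x s hs.1).continuousAt).continuousWithinAt)
      (fun s hs => (hγ x s hs.1).hasDerivWithinAt)
      (fun s hs => ((hγ y s hs.1).continuousAt).continuousWithinAt)
      (fun s hs => (hγ y s hs.1).hasDerivWithinAt)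
      (by simp only [hγ0]; exact le_refl (dist x y)) t ⟨ht, le_rfl⟩
    simpa using h
  have hmain : ∀ M : ℝ, 0 < M →
      ContinuousOn (fun p : (Fin N → ℝ) × ℝ => gm γ p.2 p.1) (univ ×ˢ Iio M) := by
    intro M hM
    refine continuousOn_prod_of_continuousOn_lipschitzOnWith _ (Real.toNNReal (Real.exp (L * M)))
      (fun x _ => (hct x).continuousOn) ?_
    intro t ht
    rw [lipschitzOnWith_univ]
    refine LipschitzWith.of_dist_le_mul fun x y => ?_
    have h1 : dist (gm γ t x) (gm γ t y) ≤ dist x y * Real.exp (L * max t 0) :=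
      hdist (max t 0) (le_max_right _ _) x y
    have h2 : Real.exp (L * max t 0) ≤ Real.exp (L * M) := by
      apply Real.exp_le_exp.2
      have : max t 0 ≤ M := max_le (le_of_lt ht) hM.le
      exact mul_le_mul_of_nonneg_left this L.2
    calc dist (gm γ t x) (gm γ t y) ≤ dist x y * Real.exp (L * max t 0) := h1
      _ ≤ Real.exp (L * M) * dist x y := by
          rw [mul_comm]; exact mul_le_mul_of_nonneg_right h2 dist_nonneg
      _ = (Real.toNNReal (Real.exp (L * M)) : ℝ) * dist x y := by
          rw [Real.coe_toNNReal _ (Real.exp_pos _).le]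
  have hF : Continuous fun p : (Fin N → ℝ) × ℝ => gm γ p.2 p.1 := by
    rw [continuous_iff_continuousAt]
    intro p
    have hM : 0 < max p.2 0 + 1 := by positivity
    refine (hmain _ hM).continuousAt (IsOpen.mem_nhds (isOpen_univ.prod isOpen_Iio) ?_)
    refine ⟨trivial, ?_⟩
    have : p.2 ≤ max p.2 0 := le_max_left _ _
    simpa using lt_of_le_of_lt this (by linarith)
  exact hF.comp continuous_swap

variable {γ : ℝ → (Fin N → ℝ) → (Fin N → ℝ)} {f : Fin N → (Fin N → ℝ) → ℝ}

/-- cumulative rate along the (truncated) flow -/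
def Phi (γ : ℝ → (Fin N → ℝ) → (Fin N → ℝ)) (f : Fin N → (Fin N → ℝ) → ℝ)
    (z : Fin N → ℝ) (u : ℝ) : ℝ := ∫ s in (0:ℝ)..u, fb f (gm γ s z)

/-- jump time density -/
def rho (γ : ℝ → (Fin N → ℝ) → (Fin N → ℝ)) (f : Fin N → (Fin N → ℝ) → ℝ)
    (z : Fin N → ℝ) (t : ℝ) : ℝ := fb f (gm γ t z) * Real.exp (-(Phi γ f z t))

section Analysis

variable (hgm : Continuous fun p : ℝ × (Fin N → ℝ) => gm γ p.1 p.2)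
  (hfb : Continuous (fb f))

include hgm hfb

theorem continuous_Phi : Continuous fun p : (Fin N → ℝ) × ℝ => Phi γ f p.1 p.2 := by
  have h : Continuous fun q : (Fin N → ℝ) × ℝ => fb f (gm γ q.2 q.1) :=
    hfb.comp (hgm.comp (continuous_snd.prodMk continuous_fst))
  exact intervalIntegral.continuous_parametric_primitive_of_continuous
    (f := fun (z : Fin N → ℝ) s => fb f (gm γ s z)) (a₀ := 0) h

theorem continuous_rho (z : Fin N → ℝ) : Continuous (rho γ f z) := by
  have h1 : Continuous fun t : ℝ => fb f (gm γ t z) :=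
    hfb.comp (hgm.comp (continuous_id.prodMk continuous_const))
  have h2 : Continuous fun t : ℝ => Phi γ f z t := by
    have := continuous_Phi hgm hfb
    fun_prop
  exact h1.mul (h2.neg.rexp)

theorem hasDerivAt_Phi (z : Fin N → ℝ) (t : ℝ) :
    HasDerivAt (fun u => Phi γ f z u) (fb f (gm γ t z)) t := by
  have h1 : Continuous fun s : ℝ => fb f (gm γ s z) :=
    hfb.comp (hgm.comp (continuous_id.prodMk continuous_const))
  exact intervalIntegral.integral_hasDerivAt_right (h1.intervalIntegrable _ _)
    (h1.stronglyMeasurable.stronglyMeasurableAtFilter) h1.continuousAt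

theorem hasDerivAt_negexp (z : Fin N → ℝ) (t : ℝ) :
    HasDerivAt (fun u => -Real.exp (-(Phi γ f z u))) (rho γ f z t) t := by
  have h : HasDerivAt (fun u => -Real.exp (-(Phi γ f z u)))
      (-(Real.exp (-(Phi γ f z t)) * -fb f (gm γ t z))) t :=
    (((hasDerivAt_Phi hgm hfb z t).neg).exp).neg
  convert h using 1
  rw [rho]
  ring

omit hgm hfb in
theorem Phi_zero (z : Fin N → ℝ) : Phi γ f z 0 = 0 := intervalIntegral.integral_same

theorem intervalIntegral_rho_le_one (hfpos : ∀ i y, 0 < f i y) (z : Fin N → ℝ) (T : ℝ) :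
    ∫ u in (0:ℝ)..T, rho γ f z u ≤ 1 := by
  rw [intervalIntegral.integral_eq_sub_of_hasDerivAt
    (fun u _ => hasDerivAt_negexp hgm hfb z u)
    ((continuous_rho hgm hfb z).intervalIntegrable _ _)]
  have h0 : Phi γ f z 0 = 0 := Phi_zero (γ := γ) (f := f) z
  rw [h0]
  have := Real.exp_pos (-(Phi γ f z T))
  simp only [neg_zero, Real.exp_zero]
  linarith

theorem rho_nonneg (hfpos : ∀ i y, 0 < f i y) (z : Fin N → ℝ) (t : ℝ) : 0 ≤ rho γ f z t := by
  have h : 0 ≤ fb f (gm γ t z) := Finset.sum_nonneg (fun i _ => (hfpos i _).le)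
  exact mul_nonneg h (Real.exp_pos _).le

theorem integrableOn_rho (hfpos : ∀ i y, 0 < f i y) (z : Fin N → ℝ) :
    IntegrableOn (rho γ f z) (Ioi (0:ℝ)) := by
  apply integrableOn_Ioi_of_intervalIntegral_norm_bounded (I := 1) (a := (0:ℝ))
    (l := atTop) (b := fun i : ℝ => i)
    (fun i => (continuous_rho hgm hfb z).integrableOn_Ioc) tendsto_id
  filter_upwards with i
  have heq : ∫ u in (0:ℝ)..i, ‖rho γ f z u‖ = ∫ u in (0:ℝ)..i, rho γ f z u := by
    apply intervalIntegral.integral_congr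
    intro u _
    exact Real.norm_of_nonneg (rho_nonneg hgm hfb hfpos z u)
  rw [heq]
  exact intervalIntegral_rho_le_one hgm hfb hfpos z i

end Analysis

section Measures

variable (hgm : Continuous fun p : ℝ × (Fin N → ℝ) => gm γ p.1 p.2)
  (hfb : Continuous (fb f)) (hfpos : ∀ i y, 0 < f i y)

/-- the distribution of the post-jump position started from `z` (after applying the jump map) -/
def jmeas (γ : ℝ → (Fin N → ℝ) → (Fin N → ℝ)) (f : Fin N → (Fin N → ℝ) → ℝ)
    (z : Fin N → ℝ) : Measure (Fin N → ℝ) :=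
  ((volume.restrict (Ioi (0:ℝ))).withDensity fun t => ENNReal.ofReal (rho γ f z t)).map
    (fun t => gm γ t z)

include hgm

theorem measurable_gm_z (z : Fin N → ℝ) : Measurable fun t => gm γ t z := by
  have : Continuous fun t => gm γ t z := by fun_prop
  exact this.measurable

include hfb

theorem lintegral_jmeas (z : Fin N → ℝ) {h : (Fin N → ℝ) → ℝ≥0∞} (hh : Measurable h) :
    ∫⁻ y, h y ∂(jmeas γ f z)
      = ∫⁻ t in Ioi (0:ℝ), ENNReal.ofReal (rho γ f z t) * h (gm γ t z) := by
  rw [jmeas, lintegral_map hh (measurable_gm_z hgm z),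
    lintegral_withDensity_eq_lintegral_mul _
      (Measurable.ennreal_ofReal (continuous_rho hgm hfb z).measurable)
      (g := fun t => h (gm γ t z)) (hh.comp (measurable_gm_z hgm z))]
  simp [Pi.mul_apply]

theorem jmeas_apply (z : Fin N → ℝ) {B : Set (Fin N → ℝ)} (hB : MeasurableSet B) :
    jmeas γ f z B
      = ∫⁻ t in Ioi (0:ℝ), ENNReal.ofReal (rho γ f z t)
          * B.indicator (fun _ => (1:ℝ≥0∞)) (gm γ t z) := by
  have h1 : ∫⁻ y, B.indicator (fun _ => (1:ℝ≥0∞)) y ∂(jmeas γ f z) = jmeas γ f z B :=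
    lintegral_indicator_one hB
  rw [← h1, lintegral_jmeas hgm hfb z (measurable_const.indicator hB)]

include hfb hfpos

/-- identification of the kernel measure `K x` -/
theorem K_measure_eq {K : Kernel (Fin N → ℝ) (Fin N → ℝ)} {a : Fin N → (Fin N → ℝ) → (Fin N → ℝ)}
    {x : Fin N → ℝ}
    (hKx : ∀ B : Set (Fin N → ℝ), MeasurableSet B →
      K x B = ENNReal.ofReal (∑ i,
        (f i x / ∑ j, f j x) *
          ∫ t in Ioi (0:ℝ),
            (∑ j, f j (γ t (x + a i x))) *
              Real.exp (-∫ s in (0:ℝ)..t, ∑ j, f j (γ s (x + a i x))) *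
              B.indicator (fun _ => (1:ℝ)) (γ t (x + a i x)))) :
    K x = ∑ i, ENNReal.ofReal (f i x / fb f x) • jmeas γ f (x + a i x) := by
  refine Measure.ext fun B hB => ?_
  rw [hKx B hB]
  -- original integrand equals the `gm`-version a.e. on `Ioi 0`
  have horig : ∀ (i : Fin N) (t : ℝ), t ∈ Ioi (0:ℝ) →
      (∑ j, f j (γ t (x + a i x))) *
          Real.exp (-∫ s in (0:ℝ)..t, ∑ j, f j (γ s (x + a i x))) *
          B.indicator (fun _ => (1:ℝ)) (γ t (x + a i x))
        = rho γ f (x + a i x) t * B.indicator (fun _ => (1:ℝ)) (gm γ t (x + a i x)) := by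
    intro i t ht
    have ht' : (0:ℝ) ≤ t := le_of_lt ht
    have hγt : gm γ t (x + a i x) = γ t (x + a i x) := gm_of_nonneg γ ht' _
    have hint : (∫ s in (0:ℝ)..t, ∑ j, f j (γ s (x + a i x))) = Phi γ f (x + a i x) t := by
      refine intervalIntegral.integral_congr fun s hs => ?_
      rw [uIcc_of_le ht'] at hs
      rw [fb, gm_of_nonneg γ hs.1]
    rw [rho, fb, hγt, hint]
  have hmeas_i : ∀ i : Fin N, Measurable fun t =>
      rho γ f (x + a i x) t * B.indicator (fun _ => (1:ℝ)) (gm γ t (x + a i x)) := by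
    intro i
    have h1 : Continuous (rho γ f (x + a i x)) := continuous_rho hgm hfb _
    have h2 : Measurable (B.indicator (fun _ => (1:ℝ))) := measurable_const.indicator hB
    exact h1.measurable.mul (h2.comp (measurable_gm_z hgm (x + a i x)))
  have hintg : ∀ i : Fin N, IntegrableOn
      (fun t => (∑ j, f j (γ t (x + a i x))) *
          Real.exp (-∫ s in (0:ℝ)..t, ∑ j, f j (γ s (x + a i x))) *
          B.indicator (fun _ => (1:ℝ)) (γ t (x + a i x))) (Ioi (0:ℝ)) := by
    intro i
    have hcg : IntegrableOn (fun t =>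
        rho γ f (x + a i x) t * B.indicator (fun _ => (1:ℝ)) (gm γ t (x + a i x)))
        (Ioi (0:ℝ)) := by
      refine (integrableOn_rho hgm hfb hfpos (x + a i x)).mono' 
        ((hmeas_i i).aestronglyMeasurable) ?_
      filter_upwards with t
      rw [Real.norm_eq_abs, abs_mul, abs_of_nonneg (rho_nonneg hgm hfb hfpos _ t)]
      rcases Set.indicator_eq_zero_or_self B (fun _ => (1:ℝ)) (gm γ t (x + a i x)) with h | h
      · rw [h]; simp [rho_nonneg hgm hfb hfpos (x + a i x) t]
      · rw [h]; simp
    exact hcg.congr_fun (fun t ht => (horig i t ht).symm) measurableSet_Ioi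
  have hterm : ∀ i : Fin N, (0:ℝ) ≤ (f i x / ∑ j, f j x) *
      ∫ t in Ioi (0:ℝ),
        (∑ j, f j (γ t (x + a i x))) *
          Real.exp (-∫ s in (0:ℝ)..t, ∑ j, f j (γ s (x + a i x))) *
          B.indicator (fun _ => (1:ℝ)) (γ t (x + a i x)) := by
    intro i
    refine mul_nonneg (div_nonneg (hfpos i x).le
      (Finset.sum_nonneg fun j _ => (hfpos j x).le)) ?_
    refine setIntegral_nonneg measurableSet_Ioi fun t ht => ?_
    exact mul_nonneg (mul_nonneg (Finset.sum_nonneg fun j _ => (hfpos j _).le)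
      (Real.exp_pos _).le) (Set.indicator_nonneg (by simp) _)
  rw [ENNReal.ofReal_sum_of_nonneg fun i _ => hterm i]
  rw [Measure.finset_sum_apply]
  refine Finset.sum_congr rfl fun i _ => ?_
  rw [Measure.smul_apply, smul_eq_mul, jmeas_apply hgm hfb _ hB]
  rw [ENNReal.ofReal_mul (div_nonneg (hfpos i x).le (Finset.sum_nonneg fun j _ => (hfpos j x).le))]
  have : fb f x = ∑ j, f j x := rfl
  rw [this]
  congr 1
  rw [MeasureTheory.ofReal_integral_eq_lintegral_ofReal (hintg i)
    ((ae_restrict_iff' measurableSet_Ioi).2 (Filter.Eventually.of_forall fun t ht =>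
      mul_nonneg (mul_nonneg (Finset.sum_nonneg fun j _ => (hfpos j _).le)
        (Real.exp_pos _).le) (Set.indicator_nonneg (by simp) _)))]
  refine setLIntegral_congr_fun measurableSet_Ioi (fun t ht => ?_)
  rw [horig i t ht, ENNReal.ofReal_mul (rho_nonneg hgm hfb hfpos _ t)]
  congr 1
  rcases Classical.em (gm γ t (x + a i x) ∈ B) with h | h <;> simp [h]

/-- KEY: single-jump lower bound for the kernel integral -/
theorem key_lower {K : Kernel (Fin N → ℝ) (Fin N → ℝ)} {a : Fin N → (Fin N → ℝ) → (Fin N → ℝ)}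
    {x : Fin N → ℝ}
    (hKx : ∀ B : Set (Fin N → ℝ), MeasurableSet B →
      K x B = ENNReal.ofReal (∑ i,
        (f i x / ∑ j, f j x) *
          ∫ t in Ioi (0:ℝ),
            (∑ j, f j (γ t (x + a i x))) *
              Real.exp (-∫ s in (0:ℝ)..t, ∑ j, f j (γ s (x + a i x))) *
              B.indicator (fun _ => (1:ℝ)) (γ t (x + a i x))))
    (i : Fin N) {h : (Fin N → ℝ) → ℝ≥0∞} (hh : Measurable h) :
    ENNReal.ofReal (f i x / fb f x) *
        ∫⁻ t in Ioi (0:ℝ), ENNReal.ofReal (rho γ f (x + a i x) t) * h (gm γ t (x + a i x))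
      ≤ ∫⁻ y, h y ∂(K x) := by
  rw [K_measure_eq hgm hfb hfpos hKx]
  rw [lintegral_finset_sum_measure]
  rw [← lintegral_jmeas hgm hfb (x + a i x) hh]
  calc ENNReal.ofReal (f i x / fb f x) * ∫⁻ y, h y ∂(jmeas γ f (x + a i x))
      = ∫⁻ y, h y ∂(ENNReal.ofReal (f i x / fb f x) • jmeas γ f (x + a i x)) := by
        rw [lintegral_smul_measure, smul_eq_mul]
    _ ≤ ∑ j, ∫⁻ y, h y ∂(ENNReal.ofReal (f j x / fb f x) • jmeas γ f (x + a j x)) :=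
        Finset.single_le_sum
          (f := fun j => ∫⁻ y, h y ∂(ENNReal.ofReal (f j x / fb f x) • jmeas γ f (x + a j x)))
          (fun j _ => zero_le) (Finset.mem_univ i)

end Measures

section Chain

theorem pdmpChain_congr_gm {α : Type*} (γ : ℝ → α → α) (Δ : ℕ → α → α) (x : α) (T : ℕ → ℝ)
    (hT : ∀ l, 0 ≤ T l) : ∀ k, pdmpChain γ Δ x T k = pdmpChain (gm γ) Δ x T k
  | 0 => rfl
  | k + 1 => by
    rw [pdmpChain, pdmpChain, pdmpChain_congr_gm γ Δ x T hT k, gm_of_nonneg γ (hT k)]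

theorem pdmpChain_shift {α : Type*} (g : ℝ → α → α) (Δ : ℕ → α → α) (x : α) (T : ℕ → ℝ) :
    ∀ k, pdmpChain g (fun l => Δ (l + 1)) (g (T 0) (Δ 0 x)) (fun l => T (l + 1)) k
      = pdmpChain g Δ x T (k + 1)
  | 0 => rfl
  | k + 1 => by
    rw [pdmpChain, pdmpChain, pdmpChain_shift g Δ x T k]

variable (γ : ℝ → (Fin N → ℝ) → (Fin N → ℝ)) (f : Fin N → (Fin N → ℝ) → ℝ)
  (a : Fin N → (Fin N → ℝ) → (Fin N → ℝ))

/-- the chain of positions, using the truncated flow -/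
def chn (idx : ℕ → Fin N) (x : Fin N → ℝ) (T : ℕ → ℝ) (k : ℕ) : Fin N → ℝ :=
  pdmpChain (gm γ) (fun l z => z + a (idx l) z) x T k

/-- the full integrand in time coordinates `T` -/
def FrealT (idx : ℕ → Fin N) (x : Fin N → ℝ) (B : Set (Fin N → ℝ)) (n : ℕ) (T : ℕ → ℝ) : ℝ :=
  (∏ k ∈ Finset.range n,
    Real.exp (-(Phi γ f (chn γ a idx x T k) (T k))) *
      f (idx (k + 1)) (gm γ (T k) (chn γ a idx x T k))) *
  (fb f (gm γ (T n) (chn γ a idx x T n)) * Real.exp (-(Phi γ f (chn γ a idx x T n) (T n))) *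
    B.indicator (fun _ => (1:ℝ)) (gm γ (T n) (chn γ a idx x T n)))

theorem chn_zero (idx : ℕ → Fin N) (x : Fin N → ℝ) (T : ℕ → ℝ) :
    chn γ a idx x T 0 = x + a (idx 0) x := rfl

theorem chn_shift (idx : ℕ → Fin N) (x : Fin N → ℝ) (T : ℕ → ℝ) (k : ℕ) :
    chn γ a (fun l => idx (l + 1)) (gm γ (T 0) (x + a (idx 0) x)) (fun l => T (l + 1)) k
      = chn γ a idx x T (k + 1) :=
  pdmpChain_shift (gm γ) (fun l z => z + a (idx l) z) x T k

theorem FrealT_succ (idx : ℕ → Fin N) (x : Fin N → ℝ) (B : Set (Fin N → ℝ)) (n : ℕ) (T : ℕ → ℝ) :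
    FrealT γ f a idx x B (n + 1) T
      = (Real.exp (-(Phi γ f (x + a (idx 0) x) (T 0))) *
          f (idx 1) (gm γ (T 0) (x + a (idx 0) x))) *
        FrealT γ f a (fun l => idx (l + 1)) (gm γ (T 0) (x + a (idx 0) x)) B n
          (fun l => T (l + 1)) := by
  unfold FrealT
  rw [Finset.prod_range_succ']
  simp only [chn_shift γ a idx x T, chn_zero γ a idx x T]
  ring

variable {γ}

theorem measurable_chn (hgm : Continuous fun p : ℝ × (Fin N → ℝ) => gm γ p.1 p.2)
    (ha : ∀ i, Continuous (a i)) (idx : ℕ → Fin N) (x : Fin N → ℝ) :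
    ∀ k, Measurable fun T : ℕ → ℝ => chn γ a idx x T k := by
  intro k
  induction k with
  | zero => exact measurable_const
  | succ k ih =>
    have hg := hgm.measurable
    have h1 : Measurable fun T : ℕ → ℝ => gm γ (T k) (chn γ a idx x T k) := by fun_prop
    have h2 : Measurable (a (idx (k + 1))) := (ha (idx (k + 1))).measurable
    show Measurable fun T : ℕ → ℝ =>
      gm γ (T k) (chn γ a idx x T k) + a (idx (k + 1)) (gm γ (T k) (chn γ a idx x T k))
    fun_prop

theorem measurable_FrealT (hgm : Continuous fun p : ℝ × (Fin N → ℝ) => gm γ p.1 p.2)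
    (hfb : Continuous (fb f)) (hfc : ∀ i, Continuous (f i)) (ha : ∀ i, Continuous (a i))
    (idx : ℕ → Fin N) (x : Fin N → ℝ) {B : Set (Fin N → ℝ)} (hB : MeasurableSet B) (n : ℕ) :
    Measurable fun T : ℕ → ℝ => FrealT γ f a idx x B n T := by
  have hg := hgm.measurable
  have hchn := measurable_chn a hgm ha idx x
  have hPhi := (continuous_Phi hgm hfb).measurable
  have hgmk : ∀ k, Measurable fun T : ℕ → ℝ => gm γ (T k) (chn γ a idx x T k) := by
    intro k; have := hchn k; fun_prop
  have hPhik : ∀ k, Measurable fun T : ℕ → ℝ => Phi γ f (chn γ a idx x T k) (T k) := by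
    intro k; have := hchn k; fun_prop
  refine Measurable.mul ?_ ?_
  · refine Finset.measurable_prod _ fun k _ => ?_
    have h1 := hPhik k
    have h2 := hgmk k
    have h3 := (hfc (idx (k + 1))).measurable
    fun_prop
  · have h1 := hPhik n
    have h2 := hgmk n
    have h3 := hfb.measurable
    have h4 : Measurable (B.indicator (fun _ => (1:ℝ))) := measurable_const.indicator hB
    fun_prop

theorem FrealT_nonneg (hfpos : ∀ i y, 0 < f i y) (idx : ℕ → Fin N) (x : Fin N → ℝ)
    (B : Set (Fin N → ℝ)) (n : ℕ) (T : ℕ → ℝ) : 0 ≤ FrealT γ f a idx x B n T := by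
  refine mul_nonneg (Finset.prod_nonneg fun k _ =>
    mul_nonneg (Real.exp_pos _).le (hfpos _ _).le) ?_
  refine mul_nonneg (mul_nonneg (Finset.sum_nonneg fun j _ => (hfpos j _).le)
    (Real.exp_pos _).le) (Set.indicator_nonneg (by simp) _)

end Chain

section Ext

/-- extension of a time vector by `0` -/
def extN (n : ℕ) (t : Fin (n + 1) → ℝ) (l : ℕ) : ℝ := if h : l < n + 1 then t ⟨l, h⟩ else 0

theorem extN_cons_zero (n : ℕ) (y : ℝ) (t' : Fin (n + 1) → ℝ) :
    extN (n + 1) (Fin.cons y t') 0 = y := by simp [extN]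

theorem extN_cons_succ (n : ℕ) (y : ℝ) (t' : Fin (n + 1) → ℝ) (l : ℕ) :
    extN (n + 1) (Fin.cons y t') (l + 1) = extN n t' l := by
  unfold extN
  by_cases h : l < n + 1
  · rw [dif_pos h, dif_pos (by omega : l + 1 < n + 2)]
    have : (⟨l + 1, by omega⟩ : Fin (n + 2)) = Fin.succ ⟨l, h⟩ := rfl
    rw [this, Fin.cons_succ]
  · rw [dif_neg h, dif_neg (by omega : ¬ (l + 1 < n + 2))]

theorem extN_nonneg {n : ℕ} {t : Fin (n + 1) → ℝ} {ε : ℝ}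
    (ht : t ∈ Set.univ.pi fun _ : Fin (n + 1) => Ioc (0:ℝ) ε) (l : ℕ) : 0 ≤ extN n t l := by
  unfold extN
  by_cases h : l < n + 1
  · rw [dif_pos h]
    exact (ht ⟨l, h⟩ trivial).1.le
  · rw [dif_neg h]

theorem measurable_extN_cons (n : ℕ) :
    Measurable fun p : ℝ × (Fin (n + 1) → ℝ) => extN (n + 1) (Fin.cons p.1 p.2) := by
  refine measurable_pi_lambda _ fun l => ?_
  unfold extN
  by_cases h : l < n + 2
  · simp only [dif_pos h]
    rcases l with _ | l
    · simpa using measurable_fst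
    · have heq : ∀ p : ℝ × (Fin (n + 1) → ℝ),
          Fin.cons (α := fun _ => ℝ) p.1 p.2 ⟨l + 1, h⟩ = p.2 ⟨l, by omega⟩ := by
        intro p
        have h2 : (⟨l + 1, h⟩ : Fin (n + 2)) = Fin.succ ⟨l, by omega⟩ := rfl
        rw [h2, Fin.cons_succ]
      simp only [heq]
      exact (measurable_pi_apply _).comp measurable_snd
  · simp only [dif_neg h]
    exact measurable_const

end Ext

section OfReal

theorem ofReal_setIntegral_le {α : Type*} [MeasurableSpace α] {μ : Measure α} {s : Set α}
    (hs : MeasurableSet s) (F G : α → ℝ) (hFG : ∀ t ∈ s, F t = G t) (hF : ∀ t, 0 ≤ F t)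
    (c : ℝ) (hc : 0 ≤ c) :
    ENNReal.ofReal (c * ∫ t in s, F t ∂μ)
      ≤ ENNReal.ofReal c * ∫⁻ t in s, ENNReal.ofReal (G t) ∂μ := by
  by_cases hint : Integrable F (μ.restrict s)
  · rw [ENNReal.ofReal_mul hc,
      MeasureTheory.ofReal_integral_eq_lintegral_ofReal hint (Filter.Eventually.of_forall hF)]
    refine mul_le_mul_right (le_of_eq ?_) _
    exact setLIntegral_congr_fun hs (fun t ht => by rw [hFG t ht])
  · rw [integral_undef hint, mul_zero, ENNReal.ofReal_zero]
    exact zero_le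

end OfReal

end PdmpAux

open PdmpAux

/-- the `(n+1)`-fold iterate of the jump-chain kernel `K` is bounded below by
the sub-probability corresponding to jumps of particles `i_0, …, i_n` with inter-jump times
in `(0, ε]`. -/
theorem jump_chain_kernel_lower_bound
    (N : ℕ) (hN : 1 ≤ N)
    (b : (Fin N → ℝ) → (Fin N → ℝ)) (hbC : ContDiff ℝ 1 b)
    (hbLip : ∃ L : NNReal, LipschitzWith L b)
    (hbGrowth : ∃ c : ℝ, ∀ x, ‖b x‖ ≤ c * (1 + ‖x‖))
    (γ : ℝ → (Fin N → ℝ) → (Fin N → ℝ))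
    (hγ0 : ∀ x, γ 0 x = x)
    (hγ : ∀ x t, 0 ≤ t → HasDerivAt (fun s => γ s x) (b (γ t x)) t)
    (f : Fin N → (Fin N → ℝ) → ℝ)
    (hfpos : ∀ i x, 0 < f i x)
    (hfLip : ∀ i, ∃ L : NNReal, LipschitzWith L (f i))
    (hfbdd : ∀ i, ∃ c : ℝ, ∀ x, f i x ≤ c)
    (hfdiv : ∀ x, (∫⁻ s in Ioi (0:ℝ), ENNReal.ofReal (∑ i, f i (γ s x))) = ⊤)
    (a : Fin N → (Fin N → ℝ) → (Fin N → ℝ)) (haC : ∀ i, ContDiff ℝ 1 (a i))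
    (K : Kernel (Fin N → ℝ) (Fin N → ℝ)) [IsMarkovKernel K]
    (hK : ∀ x (B : Set (Fin N → ℝ)), MeasurableSet B →
      K x B = ENNReal.ofReal (∑ i,
        (f i x / ∑ j, f j x) *
          ∫ t in Ioi (0:ℝ),
            (∑ j, f j (γ t (x + a i x))) *
              Real.exp (-∫ s in (0:ℝ)..t, ∑ j, f j (γ s (x + a i x))) *
              B.indicator (fun _ => (1:ℝ)) (γ t (x + a i x))))
    (Kpow : ℕ → Kernel (Fin N → ℝ) (Fin N → ℝ))
    (hKpow0 : Kpow 0 = K)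
    (hKpowS : ∀ m, Kpow (m + 1) = K.comp (Kpow m)) :
    ∀ (n : ℕ) (idx : ℕ → Fin N) (ε : ℝ), 0 < ε →
      ∀ (x : Fin N → ℝ) (B : Set (Fin N → ℝ)), MeasurableSet B →
        ENNReal.ofReal
          ((f (idx 0) x / ∑ j, f j x) *
            ∫ t : Fin (n + 1) → ℝ in Set.univ.pi (fun _ => Set.Ioc (0:ℝ) ε),
              (∏ k ∈ Finset.range n,
                (Real.exp (-∫ s in (0:ℝ)..(if h : k < n + 1 then t ⟨k, h⟩ else 0),
                    ∑ j, f j (γ s (pdmpChain γ (fun l z => z + a (idx l) z) x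
                      (fun l => if h : l < n + 1 then t ⟨l, h⟩ else 0) k))) *
                  f (idx (k + 1))
                    (γ (if h : k < n + 1 then t ⟨k, h⟩ else 0)
                      (pdmpChain γ (fun l z => z + a (idx l) z) x
                        (fun l => if h : l < n + 1 then t ⟨l, h⟩ else 0) k)))) *
              ((∑ j, f j (γ (if h : n < n + 1 then t ⟨n, h⟩ else 0)
                  (pdmpChain γ (fun l z => z + a (idx l) z) x
                    (fun l => if h : l < n + 1 then t ⟨l, h⟩ else 0) n))) *
                Real.exp (-∫ s in (0:ℝ)..(if h : n < n + 1 then t ⟨n, h⟩ else 0),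
                  ∑ j, f j (γ s (pdmpChain γ (fun l z => z + a (idx l) z) x
                    (fun l => if h : l < n + 1 then t ⟨l, h⟩ else 0) n))) *
                B.indicator (fun _ => (1:ℝ))
                  (γ (if h : n < n + 1 then t ⟨n, h⟩ else 0)
                    (pdmpChain γ (fun l z => z + a (idx l) z) x
                      (fun l => if h : l < n + 1 then t ⟨l, h⟩ else 0) n))))
          ≤ Kpow n x B := by
  obtain ⟨L, hbLip'⟩ := hbLip
  have hgm : Continuous fun p : ℝ × (Fin N → ℝ) => gm γ p.1 p.2 := continuous_gm hbLip' hγ0 hγ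
  have hfc : ∀ i, Continuous (f i) := fun i => (hfLip i).choose_spec.continuous
  have hfb : Continuous (fb f) := by
    show Continuous fun x => ∑ j, f j x
    exact continuous_finset_sum _ fun i _ => hfc i
  have hfbpos : ∀ y, 0 < fb f y := by
    intro y
    have hne : Nonempty (Fin N) := Fin.pos_iff_nonempty.mp hN
    exact Finset.sum_pos (fun i _ => hfpos i y) Finset.univ_nonempty
  have ha' : ∀ i, Continuous (a i) := fun i => (haC i).continuous
  have hcomm : ∀ m, Kpow (m + 1) = (Kpow m).comp K := by
    intro m
    induction m with
    | zero => rw [hKpowS 0, hKpow0]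
    | succ m ih => rw [hKpowS (m + 1), ih, ← Kernel.comp_assoc, ← hKpowS m, ih]
  intro n idx ε hε x B hB
  -- the main induction
  have claim : ∀ (n : ℕ) (idx : ℕ → Fin N) (x : Fin N → ℝ) (B : Set (Fin N → ℝ)),
      MeasurableSet B →
      ENNReal.ofReal (f (idx 0) x / fb f x) *
          ∫⁻ t : Fin (n + 1) → ℝ in Set.univ.pi (fun _ => Set.Ioc (0:ℝ) ε),
            ENNReal.ofReal (FrealT γ f a idx x B n (extN n t))
        ≤ Kpow n x B := by
    clear hB hε idx B n
    intro n
    induction n with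
    | zero =>
      intro idx x B hB
      rw [hKpow0]
      have e1 : ∫⁻ t : Fin 1 → ℝ in Set.univ.pi (fun _ => Set.Ioc (0:ℝ) ε),
            ENNReal.ofReal (FrealT γ f a idx x B 0 (extN 0 t))
          = ∫⁻ u in Set.Ioc (0:ℝ) ε,
              ENNReal.ofReal (FrealT γ f a idx x B 0 (extN 0 (fun _ => u))) := by
        have hmp : MeasurePreserving (MeasurableEquiv.funUnique (Fin 1) ℝ).symm
            (volume : Measure ℝ) (volume : Measure (Fin 1 → ℝ)) := by
          rw [show (volume : Measure (Fin 1 → ℝ)) = Measure.pi fun _ => volume from rfl]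
          exact (measurePreserving_funUnique (volume : Measure ℝ) (Fin 1)).symm _
        have hpre : (MeasurableEquiv.funUnique (Fin 1) ℝ).symm ⁻¹'
            (Set.univ.pi fun _ : Fin 1 => Set.Ioc (0:ℝ) ε) = Set.Ioc (0:ℝ) ε := by
          ext u
          simp [MeasurableEquiv.funUnique, Set.mem_pi]
        rw [← hmp.setLIntegral_comp_preimage_emb
          (MeasurableEquiv.funUnique (Fin 1) ℝ).symm.measurableEmbedding _ _, hpre]
        rfl
      rw [e1]
      have e2 : ∀ u : ℝ, ENNReal.ofReal (FrealT γ f a idx x B 0 (extN 0 (fun _ : Fin 1 => u)))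
          = ENNReal.ofReal (rho γ f (x + a (idx 0) x) u) *
              B.indicator (fun _ => (1:ℝ≥0∞)) (gm γ u (x + a (idx 0) x)) := by
        intro u
        have hT0 : extN 0 (fun _ : Fin 1 => u) 0 = u := by simp [extN]
        have hch : chn γ a idx x (extN 0 (fun _ : Fin 1 => u)) 0 = x + a (idx 0) x := rfl
        rw [FrealT, hT0, hch]
        simp only [Finset.range_zero, Finset.prod_empty, one_mul]
        rw [show rho γ f (x + a (idx 0) x) u
            = fb f (gm γ u (x + a (idx 0) x)) * Real.exp (-(Phi γ f (x + a (idx 0) x) u))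
          from rfl]
        rcases Classical.em (gm γ u (x + a (idx 0) x) ∈ B) with h | h <;>
          simp [h, ENNReal.ofReal_mul,
            mul_nonneg (Finset.sum_nonneg fun j _ => (hfpos j _).le) (Real.exp_pos _).le]
      calc ENNReal.ofReal (f (idx 0) x / fb f x) *
            ∫⁻ u in Set.Ioc (0:ℝ) ε,
              ENNReal.ofReal (FrealT γ f a idx x B 0 (extN 0 (fun _ => u)))
          = ENNReal.ofReal (f (idx 0) x / fb f x) *
            ∫⁻ u in Set.Ioc (0:ℝ) ε,
              ENNReal.ofReal (rho γ f (x + a (idx 0) x) u) *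
                B.indicator (fun _ => (1:ℝ≥0∞)) (gm γ u (x + a (idx 0) x)) := by
            congr 1
            exact lintegral_congr fun u => e2 u
        _ ≤ ENNReal.ofReal (f (idx 0) x / fb f x) *
            ∫⁻ u in Set.Ioi (0:ℝ),
              ENNReal.ofReal (rho γ f (x + a (idx 0) x) u) *
                B.indicator (fun _ => (1:ℝ≥0∞)) (gm γ u (x + a (idx 0) x)) :=
            mul_le_mul_right (lintegral_mono_set Set.Ioc_subset_Ioi_self) _
        _ ≤ ∫⁻ y, B.indicator (fun _ => (1:ℝ≥0∞)) y ∂(K x) :=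
            key_lower hgm hfb hfpos (fun B hB => hK x B hB) (idx 0)
              (measurable_const.indicator hB)
        _ = K x B := lintegral_indicator_one hB
    | succ n ih =>
      intro idx x B hB
      set z := x + a (idx 0) x with hzdef
      -- Fubini: peel off the first coordinate
      have hsplit : ∫⁻ t : Fin (n + 2) → ℝ in Set.univ.pi (fun _ => Set.Ioc (0:ℝ) ε),
            ENNReal.ofReal (FrealT γ f a idx x B (n + 1) (extN (n + 1) t))
          = ∫⁻ y in Set.Ioc (0:ℝ) ε,
              ∫⁻ t' : Fin (n + 1) → ℝ in Set.univ.pi (fun _ => Set.Ioc (0:ℝ) ε),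
                ENNReal.ofReal (FrealT γ f a idx x B (n + 1) (extN (n + 1) (Fin.cons y t'))) := by
        set e := MeasurableEquiv.piFinSuccAbove (fun _ : Fin (n + 2) => ℝ) 0 with hedef
        have hmp : MeasurePreserving e.symm
            ((volume : Measure ℝ).prod (volume : Measure (Fin (n + 1) → ℝ)))
            (volume : Measure (Fin (n + 2) → ℝ)) := by
          rw [show (volume : Measure (Fin (n + 2) → ℝ)) = Measure.pi fun _ => volume from rfl,
            show (volume : Measure (Fin (n + 1) → ℝ)) = Measure.pi fun _ => volume from rfl]
          exact (measurePreserving_piFinSuccAbove (fun _ : Fin (n + 2) => (volume : Measure ℝ))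
            0).symm _
        have hsm : ∀ p : ℝ × (Fin (n + 1) → ℝ), e.symm p = Fin.cons p.1 p.2 := by
          intro p
          show (Fin.insertNthEquiv (fun _ => ℝ) 0) p = _
          simp [Fin.insertNthEquiv, Fin.insertNth_zero]
        have hpre : e.symm ⁻¹' (Set.univ.pi fun _ : Fin (n + 2) => Set.Ioc (0:ℝ) ε)
            = (Set.Ioc (0:ℝ) ε) ×ˢ (Set.univ.pi fun _ : Fin (n + 1) => Set.Ioc (0:ℝ) ε) := by
          ext p
          simp only [Set.mem_preimage, hsm p, Set.mem_pi, Set.mem_univ, forall_true_left,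
            Set.mem_prod, Fin.forall_fin_succ, Fin.cons_zero, Fin.cons_succ]
        rw [← hmp.setLIntegral_comp_preimage_emb e.symm.measurableEmbedding _ _, hpre,
          ← Measure.prod_restrict]
        have hmeasF : Measurable fun p : ℝ × (Fin (n + 1) → ℝ) =>
            ENNReal.ofReal (FrealT γ f a idx x B (n + 1) (extN (n + 1) (Fin.cons p.1 p.2))) :=
          ((measurable_FrealT f a hgm hfb hfc ha' idx x hB (n + 1)).comp
            (measurable_extN_cons n)).ennreal_ofReal
        rw [lintegral_prod _ (by
          refine AEMeasurable.congr hmeasF.aemeasurable ?_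
          filter_upwards with p
          rw [hsm p])]
        · refine lintegral_congr fun y => lintegral_congr fun t' => ?_
          rw [hsm (y, t')]
      rw [hsplit]
      -- pointwise factorization of the inner integrand
      have hptw : ∀ (y : ℝ) (t' : Fin (n + 1) → ℝ),
          ENNReal.ofReal (FrealT γ f a idx x B (n + 1) (extN (n + 1) (Fin.cons y t')))
            = ENNReal.ofReal (rho γ f z y) *
                (ENNReal.ofReal (f (idx 1) (gm γ y z) / fb f (gm γ y z)) *
                  ENNReal.ofReal (FrealT γ f a (fun l => idx (l + 1)) (gm γ y z) B n
                    (extN n t'))) := by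
        intro y t'
        have hshift : (fun l => extN (n + 1) (Fin.cons y t') (l + 1)) = extN n t' :=
          funext fun l => extN_cons_succ n y t' l
        rw [FrealT_succ, extN_cons_zero, hshift]
        have hA0 : Real.exp (-(Phi γ f z y)) * f (idx 1) (gm γ y z)
            = rho γ f z y * (f (idx 1) (gm γ y z) / fb f (gm γ y z)) := by
          rw [rho]
          field_simp [(hfbpos (gm γ y z)).ne']
        rw [hA0, ENNReal.ofReal_mul (mul_nonneg (rho_nonneg hgm hfb hfpos z y)
            (div_nonneg (hfpos _ _).le (hfbpos _).le)),
          ENNReal.ofReal_mul (rho_nonneg hgm hfb hfpos z y), mul_assoc]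
      calc ENNReal.ofReal (f (idx 0) x / fb f x) *
            ∫⁻ y in Set.Ioc (0:ℝ) ε,
              ∫⁻ t' : Fin (n + 1) → ℝ in Set.univ.pi (fun _ => Set.Ioc (0:ℝ) ε),
                ENNReal.ofReal (FrealT γ f a idx x B (n + 1) (extN (n + 1) (Fin.cons y t')))
          ≤ ENNReal.ofReal (f (idx 0) x / fb f x) *
            ∫⁻ y in Set.Ioc (0:ℝ) ε,
              ENNReal.ofReal (rho γ f z y) * Kpow n (gm γ y z) B := by
            refine mul_le_mul_right (lintegral_mono fun y => ?_) _
            have : ∫⁻ t' : Fin (n + 1) → ℝ in Set.univ.pi (fun _ => Set.Ioc (0:ℝ) ε),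
                ENNReal.ofReal (FrealT γ f a idx x B (n + 1) (extN (n + 1) (Fin.cons y t')))
              = ENNReal.ofReal (rho γ f z y) *
                (ENNReal.ofReal (f (idx 1) (gm γ y z) / fb f (gm γ y z)) *
                  ∫⁻ t' : Fin (n + 1) → ℝ in Set.univ.pi (fun _ => Set.Ioc (0:ℝ) ε),
                    ENNReal.ofReal (FrealT γ f a (fun l => idx (l + 1)) (gm γ y z) B n
                      (extN n t'))) := by
              rw [← lintegral_const_mul' _ _ ENNReal.ofReal_ne_top,
                ← lintegral_const_mul' _ _ ENNReal.ofReal_ne_top]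
              exact lintegral_congr fun t' => hptw y t'
            rw [this]
            refine mul_le_mul_right ?_ _
            exact ih (fun l => idx (l + 1)) (gm γ y z) B hB
        _ ≤ ENNReal.ofReal (f (idx 0) x / fb f x) *
            ∫⁻ y in Set.Ioi (0:ℝ),
              ENNReal.ofReal (rho γ f z y) * Kpow n (gm γ y z) B :=
            mul_le_mul_right (lintegral_mono_set Set.Ioc_subset_Ioi_self) _
        _ ≤ ∫⁻ w, Kpow n w B ∂(K x) :=
            key_lower hgm hfb hfpos (fun B hB => hK x B hB) (idx 0)
              (Kernel.measurable_coe (Kpow n) hB)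
        _ = Kpow (n + 1) x B := by
            rw [hcomm n, Kernel.comp_apply' _ _ _ hB]
  -- conversion of the statement to the `claim`
  refine le_trans (ofReal_setIntegral_le (MeasurableSet.univ_pi fun _ => measurableSet_Ioc)
    _ (fun t => FrealT γ f a idx x B n (extN n t)) ?_ ?_ _
    (div_nonneg (hfpos _ _).le (Finset.sum_nonneg fun j _ => (hfpos j _).le))) ?_
  · -- pointwise equality on the cube
    intro t ht
    have hTnn : ∀ l, 0 ≤ extN n t l := extN_nonneg ht
    have hlam : (fun l => if h : l < n + 1 then t ⟨l, h⟩ else 0) = extN n t := rfl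
    have hdite : ∀ l : ℕ, (if h : l < n + 1 then t ⟨l, h⟩ else 0) = extN n t l := fun _ => rfl
    simp only [hlam, hdite]
    have hchain : ∀ k, pdmpChain γ (fun l z => z + a (idx l) z) x (extN n t) k
        = chn γ a idx x (extN n t) k :=
      pdmpChain_congr_gm γ _ x _ hTnn
    have hexp : ∀ (C : Fin N → ℝ) (u : ℝ), 0 ≤ u →
        (∫ s in (0:ℝ)..u, ∑ j, f j (γ s C)) = Phi γ f C u := by
      intro C u hu
      refine intervalIntegral.integral_congr fun s hs => ?_
      rw [uIcc_of_le hu] at hs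
      show ∑ j, f j (γ s C) = fb f (gm γ s C)
      rw [fb, gm_of_nonneg γ hs.1]
    have hgel : ∀ (C : Fin N → ℝ) (u : ℝ), 0 ≤ u → γ u C = gm γ u C :=
      fun C u hu => (gm_of_nonneg γ hu C).symm
    rw [FrealT]
    congr 1
    · refine Finset.prod_congr rfl fun k hk => ?_
      rw [hchain k, hexp _ _ (hTnn k), hgel _ _ (hTnn k)]
    · rw [hchain n, hexp _ _ (hTnn n), hgel _ _ (hTnn n)]
      rfl
  · -- nonnegativity of the original integrand
    intro t
    refine mul_nonneg (Finset.prod_nonneg fun k _ =>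
      mul_nonneg (Real.exp_pos _).le (hfpos _ _).le) ?_
    exact mul_nonneg (mul_nonneg (Finset.sum_nonneg fun j _ => (hfpos j _).le)
      (Real.exp_pos _).le) (Set.indicator_nonneg (by simp) _)
  · exact claim n idx x B hB
end
end

section
/- Let G : ℝ^{N+1} → ℝ^N be continuously differentiable such that its differential DG(z) : ℝ^{N+1} → ℝ^N is surjective at every point z (equivalently, the N-dimensional Jacobian J_G(z) = √(det(DG(z) DG(z)^T)) is strictly positive everywhere). Then for every σ-finite measure μ on ℝ^{N+1} that is absolutely continuous with respect to Lebesgue measure, the pushforward measure G_*μ is absolutely continuous with respect to Lebesgue measure on ℝ^N. -/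
open MeasureTheory Set
open scoped RealInnerProductSpace

/-- Key lemma: preimage of a null set under a `C¹` submersion `ℝ^{N+1} → ℝ^N` is null. -/
lemma submersion_preimage_null
    (N : ℕ)
    (G : EuclideanSpace ℝ (Fin (N + 1)) → EuclideanSpace ℝ (Fin N))
    (hG : ContDiff ℝ 1 G)
    (hsurj : ∀ z, Function.Surjective (fderiv ℝ G z))
    {T : Set (EuclideanSpace ℝ (Fin N))} (hTm : MeasurableSet T) (hT : volume T = 0) :
    volume (G ⁻¹' T) = 0 := by
  classical
  apply measure_null_of_locally_null
  intro z0 _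
  set D : EuclideanSpace ℝ (Fin (N + 1)) →L[ℝ] EuclideanSpace ℝ (Fin N) :=
    fderiv ℝ G z0 with hDdef
  -- find a nonzero kernel vector of `D`
  have hnotinj : ¬ Function.Injective D := by
    intro h
    have h2 := LinearMap.finrank_le_finrank_of_injective
      (f := (D : EuclideanSpace ℝ (Fin (N + 1)) →ₗ[ℝ] EuclideanSpace ℝ (Fin N))) h
    simp only [finrank_euclideanSpace_fin] at h2
    omega
  obtain ⟨a, b, hab, hne⟩ := Function.not_injective_iff.1 hnotinj
  set v : EuclideanSpace ℝ (Fin (N + 1)) := a - b with hvdef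
  have hv0 : v ≠ 0 := sub_ne_zero.2 hne
  have hDv : D v = 0 := by simp [hvdef, map_sub, hab]
  have hvv : ⟪v, v⟫ ≠ 0 := fun h => hv0 (inner_self_eq_zero.1 h)
  -- the linear map `L = (D, ⟪v, ·⟫)` is bijective
  set L : EuclideanSpace ℝ (Fin (N + 1)) →L[ℝ] EuclideanSpace ℝ (Fin N) × ℝ :=
    D.prod (innerSL ℝ v) with hLdef
  have hLsurj : Function.Surjective L := by
    rintro ⟨y, t⟩
    obtain ⟨x, hx⟩ := hsurj z0 y
    refine ⟨x + ((t - ⟪v, x⟫) / ⟪v, v⟫) • v, ?_⟩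
    have h1 : D (x + ((t - ⟪v, x⟫) / ⟪v, v⟫) • v) = y := by
      rw [map_add, D.map_smul, hDv, smul_zero, add_zero]
      exact hx
    have h2 : ⟪v, x + ((t - ⟪v, x⟫) / ⟪v, v⟫) • v⟫ = t := by
      rw [inner_add_right, real_inner_smul_right, div_mul_cancel₀ _ hvv]
      ring
    exact Prod.ext h1 h2
  have hLinj : Function.Injective L := by
    have hrank : Module.finrank ℝ (EuclideanSpace ℝ (Fin (N + 1)))
        = Module.finrank ℝ (EuclideanSpace ℝ (Fin N) × ℝ) := by
      simp [finrank_euclideanSpace_fin, Module.finrank_prod]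
    exact (LinearMap.injective_iff_surjective_of_finrank_eq_finrank
      (f := (L : EuclideanSpace ℝ (Fin (N + 1)) →ₗ[ℝ] EuclideanSpace ℝ (Fin N) × ℝ))
      hrank).2 hLsurj
  set eL : EuclideanSpace ℝ (Fin (N + 1)) ≃L[ℝ] EuclideanSpace ℝ (Fin N) × ℝ :=
    (LinearEquiv.ofBijective
      (L : EuclideanSpace ℝ (Fin (N + 1)) →ₗ[ℝ] EuclideanSpace ℝ (Fin N) × ℝ)
      ⟨hLinj, hLsurj⟩).toContinuousLinearEquiv
    with heLdef
  have heL : ∀ x, eL x = L x := fun _ => rfl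
  -- the auxiliary map `Fm`
  set Fm : EuclideanSpace ℝ (Fin (N + 1)) → EuclideanSpace ℝ (Fin (N + 1)) :=
    fun z => eL.symm (G z, innerSL ℝ v z) with hFmdef
  have hFm : ContDiff ℝ 1 Fm :=
    (eL.symm : EuclideanSpace ℝ (Fin N) × ℝ →L[ℝ] EuclideanSpace ℝ (Fin (N + 1))).contDiff.comp
      (hG.prodMk (innerSL ℝ v).contDiff)
  have hDFm : HasFDerivAt Fm (ContinuousLinearMap.id ℝ (EuclideanSpace ℝ (Fin (N + 1)))) z0 := by
    have h1 : HasFDerivAt (fun z => (G z, innerSL ℝ v z)) L z0 :=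
      ((hG.differentiable one_ne_zero z0).hasFDerivAt).prodMk (innerSL ℝ v).hasFDerivAt
    have h2 := ((eL.symm :
      EuclideanSpace ℝ (Fin N) × ℝ →L[ℝ] EuclideanSpace ℝ (Fin (N + 1))).hasFDerivAt).comp z0 h1
    have h3 : (eL.symm :
        EuclideanSpace ℝ (Fin N) × ℝ →L[ℝ] EuclideanSpace ℝ (Fin (N + 1))).comp L
        = ContinuousLinearMap.id ℝ (EuclideanSpace ℝ (Fin (N + 1))) := by
      refine ContinuousLinearMap.ext fun x => ?_
      show eL.symm (L x) = x
      rw [← heL x]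
      exact eL.symm_apply_apply x
    rwa [h3] at h2
  have hfderiv : fderiv ℝ Fm z0 = ContinuousLinearMap.id ℝ (EuclideanSpace ℝ (Fin (N + 1))) :=
    hDFm.fderiv
  -- local injectivity via the inverse function theorem
  have hstrict : HasStrictFDerivAt Fm
      ((ContinuousLinearEquiv.refl ℝ (EuclideanSpace ℝ (Fin (N + 1)))) :
        EuclideanSpace ℝ (Fin (N + 1)) →L[ℝ] EuclideanSpace ℝ (Fin (N + 1))) z0 := by
    have h := (hFm.contDiffAt (x := z0)).hasStrictFDerivAt one_ne_zero
    rw [hfderiv] at h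
    rwa [ContinuousLinearEquiv.coe_refl]
  set Φ := hstrict.toOpenPartialHomeomorph Fm with hΦdef
  have hz0Φ : z0 ∈ Φ.source := hstrict.mem_toOpenPartialHomeomorph_source
  -- the set where the Jacobian of `Fm` is large
  set U : Set (EuclideanSpace ℝ (Fin (N + 1))) :=
    {z | (1 : ℝ) / 2 < |(fderiv ℝ Fm z).det|} with hUdef
  have hUopen : IsOpen U := by
    have hcont : Continuous fun z => |(fderiv ℝ Fm z).det| :=
      continuous_abs.comp (ContinuousLinearMap.continuous_det.comp
        (hFm.continuous_fderiv one_ne_zero))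
    exact isOpen_lt continuous_const hcont
  have hz0U : z0 ∈ U := by
    simp only [hUdef, mem_setOf_eq, hfderiv]
    norm_num [ContinuousLinearMap.det]
  have hVopen : IsOpen (Φ.source ∩ U) := Φ.open_source.inter hUopen
  have hz0V : z0 ∈ Φ.source ∩ U := ⟨hz0Φ, hz0U⟩
  refine ⟨G ⁻¹' T ∩ (Φ.source ∩ U),
    inter_mem_nhdsWithin _ (hVopen.mem_nhds hz0V), ?_⟩
  have hs_meas : MeasurableSet (G ⁻¹' T ∩ (Φ.source ∩ U)) :=
    (hTm.preimage hG.continuous.measurable).inter hVopen.measurableSet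
  have hinj : Set.InjOn Fm (G ⁻¹' T ∩ (Φ.source ∩ U)) := Φ.injOn.mono fun x hx => hx.2.1
  have hders : ∀ x ∈ G ⁻¹' T ∩ (Φ.source ∩ U),
      HasFDerivWithinAt Fm (fderiv ℝ Fm x) (G ⁻¹' T ∩ (Φ.source ∩ U)) x := fun x _ =>
    ((hFm.differentiable one_ne_zero x).hasFDerivAt).hasFDerivWithinAt
  -- the image under `Fm` is null
  have hA : MeasurableSet (T ×ˢ (univ : Set ℝ)) := hTm.prod MeasurableSet.univ
  have hWnull : volume (eL.symm '' (T ×ˢ (univ : Set ℝ))) = 0 := by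
    rw [eL.image_symm_eq_preimage]
    haveI : (((volume : Measure (EuclideanSpace ℝ (Fin (N + 1)))).map eL)).IsAddHaarMeasure :=
      eL.isAddHaarMeasure_map volume
    haveI : (volume : Measure (EuclideanSpace ℝ (Fin N) × ℝ)).IsAddHaarMeasure := by
      rw [Measure.volume_eq_prod _ _]
      exact Measure.prod.instIsAddHaarMeasure _ _
    have hmap := (Measure.map_apply (μ := (volume : Measure (EuclideanSpace ℝ (Fin (N + 1)))))
      eL.continuous.measurable hA).symm
    rw [hmap, Measure.isAddLeftInvariant_eq_smul
      ((volume : Measure (EuclideanSpace ℝ (Fin (N + 1)))).map eL)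
      (volume : Measure (EuclideanSpace ℝ (Fin N) × ℝ))]
    have hz : (volume : Measure (EuclideanSpace ℝ (Fin N) × ℝ)) (T ×ˢ (univ : Set ℝ)) = 0 := by
      rw [Measure.volume_eq_prod _ _, Measure.prod_prod, hT, zero_mul]
    simp [hz]
  have himg : volume (Fm '' (G ⁻¹' T ∩ (Φ.source ∩ U))) = 0 := by
    refine measure_mono_null ?_ hWnull
    rintro _ ⟨z, ⟨hz, _⟩, rfl⟩
    exact ⟨(G z, innerSL ℝ v z), ⟨hz, mem_univ _⟩, rfl⟩
  have key := lintegral_abs_det_fderiv_le_addHaar_image volume hs_meas hders hinj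
  have hhalf : ENNReal.ofReal ((1 : ℝ) / 2) * volume (G ⁻¹' T ∩ (Φ.source ∩ U))
      ≤ ∫⁻ x in G ⁻¹' T ∩ (Φ.source ∩ U), ENNReal.ofReal |(fderiv ℝ Fm x).det| ∂volume := by
    rw [← setLIntegral_const (G ⁻¹' T ∩ (Φ.source ∩ U)) (ENNReal.ofReal ((1 : ℝ) / 2))]
    refine setLIntegral_mono' hs_meas fun x hx => ?_
    exact ENNReal.ofReal_le_ofReal (le_of_lt hx.2.2)
  have hzero : ENNReal.ofReal ((1 : ℝ) / 2) * volume (G ⁻¹' T ∩ (Φ.source ∩ U)) = 0 :=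
    le_antisymm (hhalf.trans (key.trans_eq himg)) (zero_le)
  rcases mul_eq_zero.1 hzero with h | h
  · exact absurd h (by simp [ENNReal.ofReal_eq_zero])
  · exact h

/-- If `G : ℝ^{N+1} → ℝ^N` is `C¹` with everywhere surjective differential
(equivalently, everywhere strictly positive `N`-dimensional Jacobian), then the pushforward
under `G` of any σ-finite measure on `ℝ^{N+1}` that is absolutely continuous with respect
to Lebesgue measure is absolutely continuous with respect to Lebesgue measure on `ℝ^N`. -/
theorem pushforward_of_submersion_absolutelyContinuous
    (N : ℕ) (hN : 1 ≤ N)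
    (G : EuclideanSpace ℝ (Fin (N + 1)) → EuclideanSpace ℝ (Fin N))
    (hG : ContDiff ℝ 1 G)
    (hsurj : ∀ z, Function.Surjective (fderiv ℝ G z))
    (μ : Measure (EuclideanSpace ℝ (Fin (N + 1)))) [SigmaFinite μ]
    (hμ : μ ≪ volume) :
    μ.map G ≪ (volume : Measure (EuclideanSpace ℝ (Fin N))) := by
  refine Measure.AbsolutelyContinuous.mk fun s hs hvs => ?_
  rw [Measure.map_apply hG.continuous.measurable hs]
  exact hμ (submersion_preimage_null N G hG hsurj hs hvs)
end

section
/- Assume in addition that for every 1 ≤ i ≤ N the map G_i : [0,∞) × ℝ^N → ℝ^N, G_i(t,x) = γ_t(Δ_i(x)), is continuously differentiable and its differential DG_i(t,x) : ℝ^{N+1} → ℝ^N is surjective at every point (t,x) (equivalently, the vector b(γ_t(Δ_i(x))) together with the columns of the matrix (∂γ_t/∂x)(Δ_i(x)) · A^i(x) span ℝ^N, where A^i is the Jacobian of Δ_i). Then for every probability density p on ℝ^N, the one-step law pK : B ↦ ∫_{ℝ^N} K(x, B) p(x) dx is absolutely continuous with respect to Lebesgue measure on ℝ^N. -/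
open MeasureTheory Set ProbabilityTheory

noncomputable section

open Measure

theorem submersion_preimage_null_s9 {N : ℕ}
    (g : (Fin N → ℝ) × ℝ → (Fin N → ℝ)) {U : Set ((Fin N → ℝ) × ℝ)} (hU : IsOpen U)
    (hg : ContDiffOn ℝ 1 g U)
    (hsurj : ∀ q ∈ U, Function.Surjective (fderiv ℝ g q))
    {B : Set (Fin N → ℝ)} (hB : volume B = 0) :
    volume (U ∩ g ⁻¹' B) = 0 := by
  haveI hHaar : (volume : Measure ((Fin N → ℝ) × ℝ)).IsAddHaarMeasure := by
    rw [volume_eq_prod]; infer_instance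
  apply measure_null_of_locally_null
  intro q hq
  have hqU : q ∈ U := hq.1
  have hct : ContDiffAt ℝ 1 g q := hg.contDiffAt (hU.mem_nhds hqU)
  set f' := fderiv ℝ g q with hf'
  have hdf : HasFDerivAt g f' q := (hct.differentiableAt one_ne_zero).hasFDerivAt
  have hs : Function.Surjective f' := hsurj q hqU
  -- the kernel of f' is one-dimensional
  set fl : ((Fin N → ℝ) × ℝ) →ₗ[ℝ] (Fin N → ℝ) := (f' : ((Fin N → ℝ) × ℝ) →ₗ[ℝ] (Fin N → ℝ))
  have hker : Module.finrank ℝ (LinearMap.ker fl) = 1 := by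
    have h1 := LinearMap.finrank_range_add_finrank_ker fl
    have h2 : LinearMap.range fl = ⊤ := LinearMap.range_eq_top.2 (by exact hs)
    rw [h2, finrank_top] at h1
    have h3 : Module.finrank ℝ ((Fin N → ℝ) × ℝ) = N + 1 := by
      simp [Module.finrank_prod]
    have h4 : Module.finrank ℝ (Fin N → ℝ) = N := by simp
    omega
  obtain ⟨v, hv⟩ : ∃ v : LinearMap.ker fl, v ≠ 0 := by
    have : Nontrivial (LinearMap.ker fl) := by
      apply Module.nontrivial_of_finrank_pos (R := ℝ); rw [hker]; norm_num
    exact exists_ne 0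
  have hv0 : (v : (Fin N → ℝ) × ℝ) ≠ 0 := by
    simpa using hv
  obtain ⟨l, hl1, hlv⟩ := exists_dual_vector ℝ (v : (Fin N → ℝ) × ℝ) (norm_ne_zero_iff.2 hv0)
  -- the map Φ = (g, l) has bijective derivative
  set Φ : ((Fin N → ℝ) × ℝ) → ((Fin N → ℝ) × ℝ) := fun w => (g w, l w) with hΦdef
  set Φ' : ((Fin N → ℝ) × ℝ) →L[ℝ] ((Fin N → ℝ) × ℝ) := f'.prod l with hΦ'def
  have hinj : Function.Injective (Φ'.toLinearMap) := by
    rw [← LinearMap.ker_eq_bot]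
    rw [eq_bot_iff]
    rintro w hw
    simp only [LinearMap.mem_ker] at hw
    have hw1 : f' w = 0 := congrArg Prod.fst hw
    have hw2 : l w = 0 := congrArg Prod.snd hw
    have hwker : w ∈ LinearMap.ker fl := by simpa [fl] using hw1
    obtain ⟨c, hc⟩ := (finrank_eq_one_iff_of_nonzero' v hv).1 hker ⟨w, hwker⟩
    have hc' : c • (v : (Fin N → ℝ) × ℝ) = w := congrArg Subtype.val hc
    have : c * ‖(v : (Fin N → ℝ) × ℝ)‖ = 0 := by
      have := congrArg l hc'
      simpa [_root_.map_smul, hlv, hw2, smul_eq_mul] using this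
    have hc0 : c = 0 := by
      rcases mul_eq_zero.1 this with h | h
      · exact h
      · exact absurd h (norm_ne_zero_iff.2 hv0)
    simp only [Submodule.mem_bot]
    rw [← hc', hc0, zero_smul]
  have hsurjΦ : Function.Surjective (Φ'.toLinearMap) :=
    LinearMap.injective_iff_surjective.1 hinj
  set e : ((Fin N → ℝ) × ℝ) ≃ₗ[ℝ] ((Fin N → ℝ) × ℝ) :=
    LinearEquiv.ofBijective Φ'.toLinearMap ⟨hinj, hsurjΦ⟩ with hedef
  set ee : ((Fin N → ℝ) × ℝ) ≃L[ℝ] ((Fin N → ℝ) × ℝ) := e.toContinuousLinearEquiv with heedef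
  have heeΦ' : (ee : ((Fin N → ℝ) × ℝ) →L[ℝ] ((Fin N → ℝ) × ℝ)) = Φ' := by
    ext w <;> rfl
  have hΦc : ContDiffAt ℝ 1 Φ q := hct.prodMk (l.contDiff.contDiffAt)
  have hdΦ : HasFDerivAt Φ (ee : ((Fin N → ℝ) × ℝ) →L[ℝ] ((Fin N → ℝ) × ℝ)) q := by
    rw [heeΦ']; exact hdf.prodMk l.hasFDerivAt
  -- local inverse
  set ginv := hΦc.localInverse hdΦ one_ne_zero with hginvdef
  have hginvC : ContDiffAt ℝ 1 ginv (Φ q) := hΦc.to_localInverse hdΦ one_ne_zero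
  obtain ⟨u, hu_nhds, huC⟩ := hginvC.contDiffOn le_rfl (by simp)
  have hev : ∀ᶠ w in nhds q, ginv (Φ w) = w :=
    (hΦc.hasStrictFDerivAt' hdΦ one_ne_zero).eventually_left_inverse
  have hVmem : {w | ginv (Φ w) = w} ∩ Φ ⁻¹' u ∈ nhds q :=
    Filter.inter_mem hev (hΦc.continuousAt.preimage_mem_nhds hu_nhds)
  refine ⟨({w | ginv (Φ w) = w} ∩ Φ ⁻¹' u) ∩ (U ∩ g ⁻¹' B), ?_, ?_⟩
  · exact Filter.inter_mem (nhdsWithin_le_nhds hVmem) self_mem_nhdsWithin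
  · refine measure_mono_null (t := ginv '' (u ∩ B ×ˢ (univ : Set ℝ))) ?_ ?_
    · rintro w ⟨⟨hwl, hwu⟩, _, hwB⟩
      exact ⟨Φ w, ⟨hwu, hwB, trivial⟩, hwl⟩
    · refine addHaar_image_eq_zero_of_differentiableOn_of_addHaar_eq_zero
        (volume : Measure ((Fin N → ℝ) × ℝ)) ?_ ?_
      · exact (huC.mono inter_subset_left).differentiableOn one_ne_zero
      · refine measure_mono_null inter_subset_right ?_
        rw [volume_eq_prod, Measure.prod_prod, hB, zero_mul]

/-- if for every `i` the map `G_i(t,x) = γ_t(Δ_i(x))` on `[0,∞) × ℝ^N` is `C¹`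
with everywhere surjective differential, then for every probability density `p` on `ℝ^N`
the one-step law `pK : B ↦ ∫ K(x,B) p(x) dx` of the jump chain is absolutely continuous
with respect to Lebesgue measure. -/
theorem one_step_law_absolutelyContinuous
    (N : ℕ) (hN : 1 ≤ N)
    (b : (Fin N → ℝ) → (Fin N → ℝ)) (hbC : ContDiff ℝ 1 b)
    (hbLip : ∃ L : NNReal, LipschitzWith L b)
    (hbGrowth : ∃ c : ℝ, ∀ x, ‖b x‖ ≤ c * (1 + ‖x‖))
    (γ : ℝ → (Fin N → ℝ) → (Fin N → ℝ))
    (hγ0 : ∀ x, γ 0 x = x)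
    (hγ : ∀ x t, 0 ≤ t → HasDerivAt (fun s => γ s x) (b (γ t x)) t)
    (f : Fin N → (Fin N → ℝ) → ℝ)
    (hfpos : ∀ i x, 0 < f i x)
    (hfLip : ∀ i, ∃ L : NNReal, LipschitzWith L (f i))
    (hfbdd : ∀ i, ∃ c : ℝ, ∀ x, f i x ≤ c)
    (hfdiv : ∀ x, (∫⁻ s in Ioi (0:ℝ), ENNReal.ofReal (∑ i, f i (γ s x))) = ⊤)
    (a : Fin N → (Fin N → ℝ) → (Fin N → ℝ)) (haC : ∀ i, ContDiff ℝ 1 (a i))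
    (K : Kernel (Fin N → ℝ) (Fin N → ℝ)) [IsMarkovKernel K]
    (hK : ∀ x (B : Set (Fin N → ℝ)), MeasurableSet B →
      K x B = ENNReal.ofReal (∑ i,
        (f i x / ∑ j, f j x) *
          ∫ t in Ioi (0:ℝ),
            (∑ j, f j (γ t (x + a i x))) *
              Real.exp (-∫ s in (0:ℝ)..t, ∑ j, f j (γ s (x + a i x))) *
              B.indicator (fun _ => (1:ℝ)) (γ t (x + a i x))))
    -- `G_i(t,x) = γ_t(Δ_i(x))` is `C¹` on `[0,∞) × ℝ^N` with surjective differential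
    (hGC : ∀ i : Fin N,
      ContDiffOn ℝ 1 (fun q : ℝ × (Fin N → ℝ) => γ q.1 (q.2 + a i q.2))
        (Ici (0:ℝ) ×ˢ (univ : Set (Fin N → ℝ))))
    (hGsurj : ∀ i : Fin N, ∀ t : ℝ, 0 ≤ t → ∀ x : Fin N → ℝ,
      Function.Surjective
        (fderivWithin ℝ (fun q : ℝ × (Fin N → ℝ) => γ q.1 (q.2 + a i q.2))
          (Ici (0:ℝ) ×ˢ (univ : Set (Fin N → ℝ))) (t, x)))
    -- a probability density `p` on `ℝ^N`
    (p : (Fin N → ℝ) → ℝ) (hpm : Measurable p) (hp0 : ∀ x, 0 ≤ p x)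
    (hp1 : (∫ x, p x) = 1) :
    ((volume.withDensity fun x => ENNReal.ofReal (p x)).bind fun x => K x)
      ≪ (volume : Measure (Fin N → ℝ)) := by
  refine Measure.AbsolutelyContinuous.mk ?_
  intro B hBm hB0
  rw [Measure.bind_apply hBm K.measurable.aemeasurable]
  -- for a.e. x, the time-slice of the preimage of B under each G_i is Lebesgue-null
  have hslice : ∀ i : Fin N, ∀ᵐ x : Fin N → ℝ,
      volume {t : ℝ | t ∈ Ioi (0:ℝ) ∧ γ t (x + a i x) ∈ B} = 0 := by
    intro i
    set G : ℝ × (Fin N → ℝ) → (Fin N → ℝ) := fun q => γ q.1 (q.2 + a i q.2) with hGdef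
    set H : (Fin N → ℝ) × ℝ → (Fin N → ℝ) := fun w => γ w.2 (w.1 + a i w.1) with hHdef
    have hU : IsOpen ((univ : Set (Fin N → ℝ)) ×ˢ Ioi (0:ℝ)) := isOpen_univ.prod isOpen_Ioi
    have hnhds : ∀ w : (Fin N → ℝ) × ℝ, w ∈ (univ : Set (Fin N → ℝ)) ×ˢ Ioi (0:ℝ) →
        (Ici (0:ℝ) ×ˢ (univ : Set (Fin N → ℝ))) ∈ nhds (w.2, w.1) := by
      intro w hw
      have h1 : (Ioi (0:ℝ) ×ˢ (univ : Set (Fin N → ℝ))) ∈ nhds (w.2, w.1) :=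
        (isOpen_Ioi.prod isOpen_univ).mem_nhds ⟨hw.2, trivial⟩
      exact Filter.mem_of_superset h1 (prod_mono Ioi_subset_Ici_self (subset_refl _))
    have hHC : ContDiffOn ℝ 1 H ((univ : Set (Fin N → ℝ)) ×ˢ Ioi (0:ℝ)) := by
      have hswap : ContDiffOn ℝ 1 (fun w : (Fin N → ℝ) × ℝ => ((w.2, w.1) : ℝ × (Fin N → ℝ)))
          ((univ : Set (Fin N → ℝ)) ×ˢ Ioi (0:ℝ)) :=
        (contDiff_snd.prodMk contDiff_fst).contDiffOn
      exact (hGC i).comp hswap (fun w hw => ⟨mem_Ici.2 (le_of_lt hw.2), trivial⟩)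
    have hHsurj : ∀ w ∈ (univ : Set (Fin N → ℝ)) ×ˢ Ioi (0:ℝ),
        Function.Surjective (fderiv ℝ H w) := by
      intro w hw
      have hmem := hnhds w hw
      have hGat : ContDiffAt ℝ 1 G (w.2, w.1) := (hGC i).contDiffAt hmem
      have hGd : HasFDerivAt G (fderiv ℝ G (w.2, w.1)) (w.2, w.1) :=
        (hGat.differentiableAt one_ne_zero).hasFDerivAt
      have hGsurj' : Function.Surjective (fderiv ℝ G (w.2, w.1)) := by
        rw [← fderivWithin_of_mem_nhds hmem]
        exact hGsurj i w.2 (le_of_lt hw.2) w.1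
      set σ : ((Fin N → ℝ) × ℝ) →L[ℝ] (ℝ × (Fin N → ℝ)) :=
        (ContinuousLinearMap.snd ℝ _ _).prod (ContinuousLinearMap.fst ℝ _ _) with hσdef
      have hHd : HasFDerivAt H ((fderiv ℝ G (w.2, w.1)).comp σ) w :=
        by have := hGd.comp w σ.hasFDerivAt; exact this
      rw [hHd.fderiv, ContinuousLinearMap.coe_comp']
      exact hGsurj'.comp (fun q => ⟨(q.2, q.1), rfl⟩)
    have hnull := submersion_preimage_null_s9 H hU hHC hHsurj hB0
    rw [volume_eq_prod] at hnull
    have hfub := measure_ae_null_of_prod_null hnull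
    filter_upwards [hfub] with x hx
    have hset : {t : ℝ | t ∈ Ioi (0:ℝ) ∧ γ t (x + a i x) ∈ B} =
        Prod.mk x ⁻¹' (((univ : Set (Fin N → ℝ)) ×ˢ Ioi (0:ℝ)) ∩ H ⁻¹' B) := by
      ext t
      simp only [mem_setOf_eq, mem_preimage, mem_inter_iff, mem_prod, mem_univ, true_and, hHdef]
    rw [hset]
    exact hx
  have hae : ∀ᵐ x ∂(volume : Measure (Fin N → ℝ)), K x B = 0 := by
    filter_upwards [ae_all_iff.2 hslice] with x hx
    rw [hK x B hBm]
    have hint : ∀ i : Fin N, (∫ t in Ioi (0:ℝ),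
        (∑ j, f j (γ t (x + a i x))) *
          Real.exp (-∫ s in (0:ℝ)..t, ∑ j, f j (γ s (x + a i x))) *
          B.indicator (fun _ => (1:ℝ)) (γ t (x + a i x))) = 0 := by
      intro i
      apply integral_eq_zero_of_ae
      rw [Filter.EventuallyEq, ae_restrict_iff' measurableSet_Ioi]
      have hnm : ∀ᵐ t : ℝ, t ∉ {t : ℝ | t ∈ Ioi (0:ℝ) ∧ γ t (x + a i x) ∈ B} :=
        measure_eq_zero_iff_ae_notMem.mp (hx i)
      filter_upwards [hnm] with t ht hti
      have hnB : γ t (x + a i x) ∉ B := fun hmem => ht ⟨hti, hmem⟩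
      simp [indicator_of_notMem hnB]
    simp only [hint, mul_zero, Finset.sum_const_zero, ENNReal.ofReal_zero]
  have hae' : ∀ᵐ x ∂(volume.withDensity fun x => ENNReal.ofReal (p x)), K x B = 0 :=
    (withDensity_absolutelyContinuous volume _).ae_le hae
  calc ∫⁻ x, K x B ∂(volume.withDensity fun x => ENNReal.ofReal (p x))
      = ∫⁻ _, 0 ∂(volume.withDensity fun x => ENNReal.ofReal (p x)) :=
        lintegral_congr_ae hae'
    _ = 0 := lintegral_zero
end
end

section
/- Let π be the image of m under the coordinate projection x ↦ x^1. Then for every d > 0, the restriction of π to the open set {v ∈ ℝ : |b̃(v)| > d} is absolutely continuous with respect to Lebesgue measure, with a density bounded (Lebesgue-almost everywhere on this set) by N·F/d. -/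
open MeasureTheory Set
open scoped ENNReal NNReal

noncomputable section

/-- The house-of-cards jump map `Δ_i`: coordinate `i` is reset to `0`, coordinate `j ≠ i`
is moved to `x^j + a_i^j(x^j)`. -/
def jmap (N : ℕ) (aij : Fin N → Fin N → ℝ → ℝ) (i : Fin N) (x : Fin N → ℝ) : Fin N → ℝ :=
  fun j => if j = i then 0 else x j + aij i j (x j)

/-- The coordinatewise flow `γ_t(x) = (γ̃_t(x^1),…,γ̃_t(x^N))`. -/
def flowN (N : ℕ) (γt : ℝ → ℝ → ℝ) (t : ℝ) (x : Fin N → ℝ) : Fin N → ℝ :=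
  fun j => γt t (x j)

/-- The survival factor `e(x,t) = exp(-∫_0^t f̄(γ_s(x)) ds)`. -/
def surv (N : ℕ) (γt : ℝ → ℝ → ℝ) (f : Fin N → ℝ → ℝ) (x : Fin N → ℝ) (t : ℝ) : ℝ :=
  Real.exp (-∫ s in (0:ℝ)..t, ∑ i, f i (γt s (x i)))

/-- Change of variables bound: if `φ` is injective on `s` with derivative `b ∘ φ`, and
`|b| > d` on `A`, then the time spent by `φ` in `A` (within `s`) is at most `vol A / d`. -/
lemma cov_aux {A : Set ℝ} (hA : MeasurableSet A) {d : ℝ} (hd : 0 < d) {b : ℝ → ℝ}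
    (hAS : ∀ v ∈ A, d < |b v|) {φ : ℝ → ℝ} {s : Set ℝ} (hs : MeasurableSet s)
    (hφ : ∀ t ∈ s, HasDerivWithinAt φ (b (φ t)) s t) (hinj : Set.InjOn φ s) :
    ∫⁻ t in s, A.indicator 1 (φ t) ≤ volume A / ENNReal.ofReal d := by
  have key : ∫⁻ v in φ '' s, A.indicator 1 v
      = ∫⁻ t in s, ENNReal.ofReal |b (φ t)| * A.indicator 1 (φ t) := by
    simpa only [ContinuousLinearMap.det_toSpanSingleton] using
      MeasureTheory.lintegral_image_eq_lintegral_abs_det_fderiv_mul volume hs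
        (fun t ht => (hφ t ht).hasFDerivWithinAt) hinj (A.indicator 1)
  have h1 : ENNReal.ofReal d * ∫⁻ t in s, A.indicator 1 (φ t) ≤ volume A := by
    calc ENNReal.ofReal d * ∫⁻ t in s, A.indicator 1 (φ t)
        = ∫⁻ t in s, ENNReal.ofReal d * A.indicator 1 (φ t) :=
          (lintegral_const_mul' _ _ ENNReal.ofReal_ne_top).symm
      _ ≤ ∫⁻ t in s, ENNReal.ofReal |b (φ t)| * A.indicator 1 (φ t) := by
          refine lintegral_mono fun t => ?_
          by_cases hm : φ t ∈ A
          · exact mul_le_mul_left (ENNReal.ofReal_le_ofReal (hAS _ hm).le) _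
          · simp [Set.indicator_of_notMem hm]
      _ = ∫⁻ v in φ '' s, A.indicator 1 v := key.symm
      _ ≤ ∫⁻ v, A.indicator 1 v := setLIntegral_le_lintegral _ _
      _ = volume A := lintegral_indicator_one hA
  rw [ENNReal.le_div_iff_mul_le (Or.inl (by simp [hd])) (Or.inl ENNReal.ofReal_ne_top)]
  rwa [mul_comm]

/-- If the velocity `b ∘ φ` does not vanish on `[0,T)`, then `φ` is injective on `[0,T]`. -/
lemma inj_aux {b : ℝ → ℝ} (hbc : Continuous b) {φ : ℝ → ℝ}
    (hder : ∀ t, 0 ≤ t → HasDerivAt φ (b (φ t)) t) {T : ℝ} (hT : 0 < T)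
    (hne : ∀ t, 0 ≤ t → t < T → b (φ t) ≠ 0) : Set.InjOn φ (Icc 0 T) := by
  have hc : ContinuousOn φ (Icc 0 T) := fun t ht => (hder t ht.1).continuousAt.continuousWithinAt
  have hψc : ContinuousOn (fun t => b (φ t)) (Icc 0 T) := hbc.comp_continuousOn hc
  by_cases h0 : 0 < b (φ 0)
  · have hpos : ∀ t ∈ interior (Icc (0:ℝ) T), 0 < deriv φ t := by
      intro t ht
      rw [interior_Icc] at ht
      rw [(hder t ht.1.le).deriv]
      by_contra hle
      push_neg at hle
      have hneq := hne t ht.1.le ht.2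
      have hlt : b (φ t) < 0 := lt_of_le_of_ne hle hneq
      have h0m : (0:ℝ) ∈ Icc (b (φ t)) (b (φ 0)) := ⟨hlt.le, h0.le⟩
      obtain ⟨u, hu, hu0⟩ := intermediate_value_Icc' ht.1.le
        (hψc.mono (Icc_subset_Icc_right ht.2.le)) h0m
      exact hne u hu.1 (lt_of_le_of_lt hu.2 ht.2) hu0
    exact (strictMonoOn_of_deriv_pos (convex_Icc 0 T) hc hpos).injOn
  · have h0' : b (φ 0) < 0 := lt_of_le_of_ne (not_lt.1 h0) (hne 0 le_rfl hT)
    have hneg : ∀ t ∈ interior (Icc (0:ℝ) T), deriv φ t < 0 := by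
      intro t ht
      rw [interior_Icc] at ht
      rw [(hder t ht.1.le).deriv]
      by_contra hle
      push_neg at hle
      have hneq := hne t ht.1.le ht.2
      have hlt : 0 < b (φ t) := lt_of_le_of_ne hle (Ne.symm hneq)
      have h0m : (0:ℝ) ∈ Icc (b (φ 0)) (b (φ t)) := ⟨h0'.le, hlt.le⟩
      obtain ⟨u, hu, hu0⟩ := intermediate_value_Icc ht.1.le
        (hψc.mono (Icc_subset_Icc_right ht.2.le)) h0m
      exact hne u hu.1 (lt_of_le_of_lt hu.2 ht.2) hu0
    exact (strictAntiOn_of_deriv_neg (convex_Icc 0 T) hc hneg).injOn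

/-- The time the flow started at `w` spends in a set `A` on which `|b| > d`
is bounded by `vol A / d`. -/
lemma time_aux {b : ℝ → ℝ} (hbc : Continuous b) {K : NNReal} (hK : LipschitzWith K b)
    {γt : ℝ → ℝ → ℝ}
    (hγ : ∀ (v t : ℝ), 0 ≤ t → HasDerivAt (fun s => γt s v) (b (γt t v)) t)
    {d : ℝ} (hd : 0 < d) {A : Set ℝ} (hA : MeasurableSet A)
    (hAS : ∀ v ∈ A, d < |b v|) (w : ℝ) :
    ∫⁻ t in Ioi (0:ℝ), A.indicator 1 (γt t w) ≤ volume A / ENNReal.ofReal d := by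
  set φ : ℝ → ℝ := fun t => γt t w with hφdef
  have hder : ∀ t, 0 ≤ t → HasDerivAt φ (b (φ t)) t := fun t ht => hγ w t ht
  have hcont : ContinuousOn φ (Ici 0) := fun t ht => (hder t ht).continuousAt.continuousWithinAt
  have hψc : ContinuousOn (fun t => b (φ t)) (Ici 0) := hbc.comp_continuousOn hcont
  by_cases hZ : ∃ t, 0 ≤ t ∧ b (φ t) = 0
  · -- the flow hits a zero of b at time t1 and stays there afterwards
    set Z : Set ℝ := {t : ℝ | 0 ≤ t ∧ b (φ t) = 0} with hZdef
    have hZne : Z.Nonempty := hZ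
    have hbdd : BddBelow Z := ⟨0, fun t ht => ht.1⟩
    have hZclosed : IsClosed Z := by
      have : Z = Ici 0 ∩ (fun t => b (φ t)) ⁻¹' {0} := by
        ext t; simp [hZdef, Set.mem_setOf_eq]
      rw [this]
      exact hψc.preimage_isClosed_of_isClosed isClosed_Ici isClosed_singleton
    set t1 : ℝ := sInf Z with ht1def
    have ht1Z : t1 ∈ Z := hZclosed.csInf_mem hZne hbdd
    have ht1_0 : 0 ≤ t1 := ht1Z.1
    have hψ0 : b (φ t1) = 0 := ht1Z.2
    have hconst : ∀ t, t1 ≤ t → φ t = φ t1 := by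
      intro t ht
      have huniq := ODE_solution_unique (v := fun _ x => b x) (K := K)
        (f := φ) (g := fun _ => φ t1) (a := t1) (b := t)
        (fun _ => hK)
        (hcont.mono fun u hu => le_trans ht1_0 hu.1)
        (fun u hu => ((hder u (le_trans ht1_0 hu.1)).hasDerivWithinAt))
        continuousOn_const
        (fun u hu => by
          have : HasDerivWithinAt (fun _ : ℝ => φ t1) 0 (Ici u) u := hasDerivWithinAt_const u _ _
          simpa [hψ0] using this)
        rfl
      exact huniq ⟨ht, le_rfl⟩
    have hnotin : ∀ t, t1 ≤ t → A.indicator (1 : ℝ → ℝ≥0∞) (φ t) = 0 := by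
      intro t ht
      refine Set.indicator_of_notMem (fun hmem => ?_) _
      have h1 := hAS _ hmem
      rw [hconst t ht] at h1
      rw [hψ0] at h1
      simp at h1
      linarith
    rcases le_or_gt t1 0 with h10 | h10
    · have hz : ∫⁻ t in Ioi (0:ℝ), A.indicator 1 (φ t) = 0 := by
        rw [setLIntegral_congr_fun measurableSet_Ioi
          (fun t (ht : t ∈ Ioi (0:ℝ)) => hnotin t (le_trans h10 (le_of_lt ht)))]
        simp
      rw [hz]; exact zero_le
    · have hsplit : Ioi (0:ℝ) ⊆ Ioo 0 t1 ∪ Ici t1 := by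
        intro t ht
        rcases lt_or_ge t t1 with h | h
        · exact Or.inl ⟨ht, h⟩
        · exact Or.inr h
      have hinj : Set.InjOn φ (Ioo 0 t1) := by
        refine (inj_aux hbc hder h10 (fun t ht0 htlt hzero => ?_)).mono Ioo_subset_Icc_self
        exact absurd (csInf_le hbdd ⟨ht0, hzero⟩) (not_le.2 htlt)
      calc ∫⁻ t in Ioi (0:ℝ), A.indicator 1 (φ t)
          ≤ ∫⁻ t in Ioo 0 t1 ∪ Ici t1, A.indicator 1 (φ t) := lintegral_mono_set hsplit
        _ ≤ (∫⁻ t in Ioo 0 t1, A.indicator 1 (φ t)) + ∫⁻ t in Ici t1, A.indicator 1 (φ t) :=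
            lintegral_union_le _ _ _
        _ ≤ volume A / ENNReal.ofReal d + 0 := by
            refine add_le_add ?_ ?_
            · exact cov_aux hA hd hAS measurableSet_Ioo
                (fun t ht => (hder t ht.1.le).hasDerivWithinAt) hinj
            · refine le_of_eq ?_
              rw [setLIntegral_congr_fun measurableSet_Ici
                (fun t (ht : t ∈ Ici t1) => hnotin t ht)]
              simp
        _ = volume A / ENNReal.ofReal d := add_zero _
  · -- b never vanishes along the trajectory: the flow is injective on (0, ∞)
    push_neg at hZ
    have hinj : Set.InjOn φ (Ioi 0) := by
      intro x hx y hy hxy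
      have hT : (0:ℝ) < max x y + 1 := by
        have : (0:ℝ) < x := hx
        have : (0:ℝ) < max x y := lt_max_of_lt_left hx
        linarith
      have h := inj_aux hbc hder hT (fun t ht _ => hZ t ht)
      exact h ⟨le_of_lt hx, by have := le_max_left x y; linarith⟩
        ⟨le_of_lt hy, by have := le_max_right x y; linarith⟩ hxy
    exact cov_aux hA hd hAS measurableSet_Ioi
      (fun t ht => (hder t (le_of_lt ht)).hasDerivWithinAt) hinj

/-- the law `π` of the first coordinate under the invariant measure `m`,
restricted to `{v : |b̃(v)| > d}`, is absolutely continuous with respect to Lebesgue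
measure, with density bounded a.e. by `N·F/d` there. -/
theorem marginal_density_bounded
    (N k : ℕ) (hN : 1 ≤ N) (F B A a : ℝ)
    (hF : 0 < F) (hB : 0 < B) (hA : 0 < A) (ha : 0 < a)
    (btilde : ℝ → ℝ) (hbC : ContDiff ℝ (k + 1 : ℕ) btilde)
    (hbB : ∀ l ≤ k + 1, ∀ v : ℝ, |iteratedDeriv l btilde v| ≤ B)
    (γt : ℝ → ℝ → ℝ) (hγ0 : ∀ v : ℝ, γt 0 v = v)
    (hγ : ∀ (v t : ℝ), 0 ≤ t → HasDerivAt (fun s => γt s v) (btilde (γt t v)) t)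
    (f : Fin N → ℝ → ℝ) (hfpos : ∀ i v, 0 < f i v)
    (hfLip : ∀ i, ∃ L : NNReal, LipschitzWith L (f i))
    (hfC : ∀ i, ContDiff ℝ (k : ℕ) (f i))
    (hfF : ∀ i, ∀ l ≤ k, ∀ v : ℝ, |iteratedDeriv l (f i) v| ≤ F)
    (aij : Fin N → Fin N → ℝ → ℝ)
    (haC : ∀ i j, i ≠ j → ContDiff ℝ (⊤ : ℕ∞) (aij i j))
    (haA : ∀ i j, i ≠ j → ∀ (l : ℕ) (v : ℝ), |iteratedDeriv l (aij i j) v| ≤ A)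
    (haInv : ∀ i j, i ≠ j → ∀ v : ℝ, a ≤ |deriv (fun w => w + aij i j w) v|)
    (hdiv : ∀ x : Fin N → ℝ,
      (∫⁻ s in Ioi (0:ℝ), ENNReal.ofReal (∑ i, f i (γt s (x i)))) = ⊤)
    (m : Measure (Fin N → ℝ)) [IsProbabilityMeasure m]
    (hrep : ∀ g : (Fin N → ℝ) → ℝ, Measurable g → (∃ C, ∀ x, |g x| ≤ C) →
      ∫ x, g x ∂m
        = ∑ i, ∫ x, (f i (x i) *
            ∫ t in Ioi (0:ℝ),
              surv N γt f (jmap N aij i x) t * g (flowN N γt t (jmap N aij i x))) ∂m) :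
    ∀ d : ℝ, 0 < d →
      (m.map (fun x => x ⟨0, hN⟩)).restrict {v : ℝ | d < |btilde v|} ≪ volume ∧
      ∃ p : ℝ → ℝ,
        (m.map (fun x => x ⟨0, hN⟩)).restrict {v : ℝ | d < |btilde v|}
          = (volume.restrict {v : ℝ | d < |btilde v|}).withDensity
              (fun v => ENNReal.ofReal (p v)) ∧
        ∀ᵐ v ∂volume.restrict {v : ℝ | d < |btilde v|}, p v ≤ N * F / d := by
  intro d hd
  have hbcont : Continuous btilde := hbC.continuous
  -- b̃ is Lipschitz
  have hdiffb : Differentiable ℝ btilde :=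
    hbC.differentiable (by simp)
  have hLip : LipschitzWith B.toNNReal btilde := by
    refine lipschitzWith_of_nnnorm_deriv_le hdiffb fun x => ?_
    have h1 := hbB 1 (Nat.le_add_left 1 k) x
    rw [iteratedDeriv_one] at h1
    rw [← NNReal.coe_le_coe]
    simpa [Real.coe_toNNReal _ hB.le, Real.norm_eq_abs] using h1
  set j0 : Fin N := ⟨0, hN⟩ with hj0
  set π : Measure ℝ := m.map (fun x => x j0) with hπdef
  haveI hπprob : IsProbabilityMeasure π :=
    Measure.isProbabilityMeasure_map (measurable_pi_apply j0).aemeasurable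
  set S : Set ℝ := {v : ℝ | d < |btilde v|} with hSdef
  have hSmeas : MeasurableSet S :=
    measurableSet_lt measurable_const (hbcont.abs.measurable)
  set c : ℝ≥0∞ := ENNReal.ofReal (N * F / d) with hcdef
  have hNF : (0:ℝ) < N * F / d := by
    have hN' : (0:ℝ) < N := by exact_mod_cast lt_of_lt_of_le Nat.zero_lt_one hN
    positivity
  -- key estimate: π A ≤ c * vol A for measurable A ⊆ S of finite volume
  have key : ∀ A : Set ℝ, MeasurableSet A → (∀ v ∈ A, d < |btilde v|) → volume A ≠ ⊤ →
      π A ≤ c * volume A := by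
    intro A hAmeas hAS hvol
    set R : ℝ := (volume A / ENNReal.ofReal d).toReal with hRdef
    have hRnn : 0 ≤ R := ENNReal.toReal_nonneg
    set g : (Fin N → ℝ) → ℝ := fun x => A.indicator (fun _ => (1:ℝ)) (x j0) with hgdef
    have hgmeas : Measurable g :=
      (measurable_const.indicator hAmeas).comp (measurable_pi_apply j0)
    have hgbd : ∀ x, |g x| ≤ 1 := by
      intro x
      by_cases hm : x j0 ∈ A <;> simp [hgdef, Set.indicator_apply, hm]
    have hrepg := hrep g hgmeas ⟨1, hgbd⟩
    -- left side is π A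
    have hLHS : ∫ x, g x ∂m = (π A).toReal := by
      have h1 : ∫ x, g x ∂m = ∫ y, A.indicator (fun _ => (1:ℝ)) y ∂π := by
        rw [hπdef, integral_map (measurable_pi_apply j0).aemeasurable
          (measurable_const.indicator hAmeas).aestronglyMeasurable]
      rw [h1, integral_indicator_const (1:ℝ) hAmeas]
      simp
      rfl
    -- bound each summand
    have hsummand : ∀ i : Fin N,
        (∫ x, (f i (x i) *
            ∫ t in Ioi (0:ℝ),
              surv N γt f (jmap N aij i x) t * g (flowN N γt t (jmap N aij i x))) ∂m)
          ≤ F * R := by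
      intro i
      have hptwise : ∀ x : Fin N → ℝ,
          (f i (x i) *
            ∫ t in Ioi (0:ℝ),
              surv N γt f (jmap N aij i x) t * g (flowN N γt t (jmap N aij i x))) ≤ F * R := by
        intro x
        set w : ℝ := jmap N aij i x j0 with hwdef
        have hgflow : ∀ t : ℝ, g (flowN N γt t (jmap N aij i x))
            = A.indicator (fun _ => (1:ℝ)) (γt t w) := fun t => rfl
        set q : ℝ → ℝ := fun t =>
          surv N γt f (jmap N aij i x) t * g (flowN N γt t (jmap N aij i x)) with hqdef
        have hqnn : ∀ t, 0 ≤ q t := by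
          intro t
          refine mul_nonneg (Real.exp_nonneg _) ?_
          rw [hgflow]
          exact Set.indicator_nonneg (fun _ _ => zero_le_one) _
        have hInonneg : (0:ℝ) ≤ ∫ t in Ioi (0:ℝ), q t := integral_nonneg hqnn
        have hsurv_le : ∀ t ∈ Ioi (0:ℝ), surv N γt f (jmap N aij i x) t ≤ 1 := by
          intro t ht
          rw [surv, Real.exp_le_one_iff, neg_nonpos]
          refine intervalIntegral.integral_nonneg (le_of_lt ht) fun u _ => ?_
          exact Finset.sum_nonneg fun i2 _ => (hfpos i2 _).le
        have hI : (∫ t in Ioi (0:ℝ), q t) ≤ R := by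
          by_cases hint : Integrable q (volume.restrict (Ioi 0))
          · rw [integral_eq_lintegral_of_nonneg_ae (ae_of_all _ hqnn)
              hint.aestronglyMeasurable]
            refine ENNReal.toReal_mono ?_ ?_
            · exact (ENNReal.div_lt_top hvol (by simp [hd])).ne
            · calc ∫⁻ t in Ioi (0:ℝ), ENNReal.ofReal (q t)
                  ≤ ∫⁻ t in Ioi (0:ℝ), A.indicator 1 (γt t w) := by
                    refine lintegral_mono_ae ((ae_restrict_iff' measurableSet_Ioi).2
                      (ae_of_all _ fun t ht => ?_))
                    by_cases hm : γt t w ∈ A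
                    · have : q t ≤ 1 := by
                        rw [hqdef]
                        simp only [hgflow, Set.indicator_of_mem hm]
                        simpa using hsurv_le t ht
                      calc ENNReal.ofReal (q t) ≤ 1 := ENNReal.ofReal_le_one.2 this
                        _ = A.indicator 1 (γt t w) := by
                          rw [Set.indicator_of_mem hm]; rfl
                    · have : q t = 0 := by
                        rw [hqdef]; simp [hgflow, Set.indicator_of_notMem hm]
                      simp [this]
                _ ≤ volume A / ENNReal.ofReal d :=
                    time_aux hbcont hLip hγ hd hAmeas hAS w
          · rw [integral_undef hint]
            exact hRnn
        have hfle : f i (x i) ≤ F := by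
          have := hfF i 0 (Nat.zero_le k) (x i)
          rw [iteratedDeriv_zero] at this
          exact (abs_le.1 this).2
        exact mul_le_mul hfle hI hInonneg hF.le
      have hptnn : ∀ x : Fin N → ℝ,
          0 ≤ (f i (x i) *
            ∫ t in Ioi (0:ℝ),
              surv N γt f (jmap N aij i x) t * g (flowN N γt t (jmap N aij i x))) := by
        intro x
        refine mul_nonneg (hfpos i _).le (integral_nonneg fun t => ?_)
        refine mul_nonneg (Real.exp_nonneg _) ?_
        exact Set.indicator_nonneg (fun _ _ => zero_le_one) _
      have hmono := integral_mono_of_nonneg (ae_of_all _ hptnn)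
        (integrable_const (μ := m) (F * R)) (ae_of_all _ hptwise)
      simpa using hmono
    have hsum : (π A).toReal ≤ N * (F * R) := by
      rw [← hLHS, hrepg]
      calc (∑ i, ∫ x, (f i (x i) *
            ∫ t in Ioi (0:ℝ),
              surv N γt f (jmap N aij i x) t * g (flowN N γt t (jmap N aij i x))) ∂m)
          ≤ ∑ _i : Fin N, F * R := Finset.sum_le_sum fun i _ => hsummand i
        _ = N * (F * R) := by simp [Finset.sum_const, nsmul_eq_mul]
    -- convert to an ENNReal inequality
    have hπAne : π A ≠ ⊤ := measure_ne_top π A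
    have hReq : R = (volume A).toReal / d := by
      rw [hRdef, ENNReal.toReal_div, ENNReal.toReal_ofReal hd.le]
    have hreal : (π A).toReal ≤ (N * F / d) * (volume A).toReal := by
      calc (π A).toReal ≤ N * (F * R) := hsum
        _ = (N * F / d) * (volume A).toReal := by rw [hReq]; ring
    calc π A = ENNReal.ofReal ((π A).toReal) := (ENNReal.ofReal_toReal hπAne).symm
      _ ≤ ENNReal.ofReal ((N * F / d) * (volume A).toReal) := ENNReal.ofReal_le_ofReal hreal
      _ = ENNReal.ofReal (N * F / d) * ENNReal.ofReal ((volume A).toReal) :=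
          ENNReal.ofReal_mul hNF.le
      _ = c * volume A := by rw [hcdef, ENNReal.ofReal_toReal hvol]
  -- the restricted marginal is dominated by c · Lebesgue
  have hle : π.restrict S ≤ c • (volume.restrict S) := by
    refine Measure.le_iff.2 fun E hE => ?_
    rw [Measure.restrict_apply hE, Measure.smul_apply, Measure.restrict_apply hE, smul_eq_mul]
    by_cases hvol : volume (E ∩ S) = ⊤
    · rw [hvol, ENNReal.mul_top (by rw [hcdef]; exact (ENNReal.ofReal_pos.2 hNF).ne')]
      exact le_top
    · exact key (E ∩ S) (hE.inter hSmeas) (fun v hv => hv.2) hvol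
  have hac2 : π.restrict S ≪ volume.restrict S :=
    (Measure.absolutelyContinuous_of_le hle).trans Measure.smul_absolutelyContinuous
  have hac : π.restrict S ≪ volume :=
    hac2.trans (Measure.absolutelyContinuous_of_le Measure.restrict_le_self)
  refine ⟨hac, fun v => ((π.restrict S).rnDeriv (volume.restrict S) v).toReal, ?_, ?_⟩
  · -- density representation
    have h1 : (volume.restrict S).withDensity
        (fun v => ENNReal.ofReal (((π.restrict S).rnDeriv (volume.restrict S) v).toReal))
        = (volume.restrict S).withDensity ((π.restrict S).rnDeriv (volume.restrict S)) := by
      refine withDensity_congr_ae ?_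
      filter_upwards [Measure.rnDeriv_lt_top (π.restrict S) (volume.restrict S)] with v hv
      rw [ENNReal.ofReal_toReal hv.ne]
    rw [h1, Measure.withDensity_rnDeriv_eq _ _ hac2]
  · -- density bound
    have hb1 : (π.restrict S).rnDeriv (volume.restrict S)
        ≤ᵐ[volume.restrict S] fun _ => c := by
      refine ae_le_of_forall_setLIntegral_le_of_sigmaFinite
        (Measure.measurable_rnDeriv _ _) fun s hs _ => ?_
      calc ∫⁻ x in s, (π.restrict S).rnDeriv (volume.restrict S) x ∂(volume.restrict S)
          ≤ (π.restrict S) s := Measure.setLIntegral_rnDeriv_le s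
        _ ≤ (c • volume.restrict S) s := Measure.le_iff'.1 hle s
        _ = c * (volume.restrict S) s := by rw [Measure.smul_apply, smul_eq_mul]
        _ = ∫⁻ _ in s, c ∂(volume.restrict S) := (setLIntegral_const s c).symm
    filter_upwards [hb1] with v hv
    calc ((π.restrict S).rnDeriv (volume.restrict S) v).toReal
        ≤ c.toReal := ENNReal.toReal_mono ENNReal.ofReal_ne_top hv
      _ = N * F / d := by rw [hcdef, ENNReal.toReal_ofReal hNF.le]
end
end
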